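/- arXiv:1511.02804 — 3 statements merged into one kernel-verified Lean document; each statement's English description precedes it below -/
import Mathlib

section
/- Define the difference operator D on functions g of partitions by Dg(λ) = Σ_{λ⁺ : |λ⁺/λ|=1} g(λ⁺) − g(λ), where the sum is over all partitions λ⁺ obtained from λ by adding one box. Then D(1/H_λ) = 0 for every partition λ; equivalently, 1/H_λ = Σ_{λ⁺ : |λ⁺/λ|=1} 1/H_{λ⁺}. -/
open Finset

namespace PaperDefs

/-- Hook length of the box in row `i`, column `j` (0-indexed) of `μ`. -/
def hookLen (μ : YoungDiagram) (i j : ℕ) : ℕ :=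
  (μ.rowLen i - j) + (μ.colLen j - i) - 1

/-- Content of a box. -/
def content (c : ℕ × ℕ) : ℤ := (c.2 : ℤ) - (c.1 : ℤ)

/-- `z_i = 1` (horizontal edge) in the 01-sequence of `μ`; the 0's (vertical
edges) occur exactly at the positions `λ_{r+1} - (r+1) = rowLen r - (r+1)`,
which realizes the normalization `#{i ≥ 0 : z_i = 0} = #{i < 0 : z_i = 1}`. -/
def ZOne (μ : YoungDiagram) (i : ℤ) : Prop :=
  ∀ r : ℕ, i ≠ (μ.rowLen r : ℤ) - (r + 1)

/-- `μ` is a `t`-core: no hook length is divisible by `t`. -/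
def IsTCore (t : ℕ) (μ : YoungDiagram) : Prop :=
  ∀ c ∈ μ.cells, ¬ (t ∣ hookLen μ c.1 c.2)

/-- `ν` is obtained from `μ` by adding one `t`-hook: a pair
`(z_i, z_{i+t}) = (0, 1)` of the 01-sequence of `μ` is exchanged to `(1, 0)`. -/
def AddHook (t : ℕ) (μ ν : YoungDiagram) : Prop :=
  ∃ i : ℤ, ¬ ZOne μ i ∧ ZOne μ (i + (t : ℤ)) ∧
    (∀ j : ℤ, ZOne ν j ↔ (j = i ∨ (j ≠ i + (t : ℤ) ∧ ZOne μ j)))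

/-- `lam ≥_t μ` : `lam` is obtained from `μ` by successively adding `t`-hooks. -/
def GEt (t : ℕ) (μ lam : YoungDiagram) : Prop :=
  Relation.ReflTransGen (AddHook t) μ lam

/-- Number of saturated chains of `n` successive `t`-hook additions from `μ` to
`lam`; this equals `F_{λ/μ}` when `|λ/μ| = nt` and vanishes otherwise. -/
noncomputable def numChains (t n : ℕ) (μ lam : YoungDiagram) : ℕ :=
  Set.ncard {c : ℕ → YoungDiagram |
    c 0 = μ ∧ c n = lam ∧ ∀ k < n, AddHook t (c k) (c (k + 1))}

/-- `H_μ`, the product of all hook lengths of `μ`. -/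
def Hprod (μ : YoungDiagram) : ℚ :=
  ∏ c ∈ μ.cells, (hookLen μ c.1 c.2 : ℚ)

/-- `G_μ = 1 / ∏_{h ∈ 𝓗_t(μ)} h`. -/
def Gfun (t : ℕ) (μ : YoungDiagram) : ℚ :=
  1 / ∏ c ∈ μ.cells.filter (fun c => t ∣ hookLen μ c.1 c.2), (hookLen μ c.1 c.2 : ℚ)

/-- The `t`-difference operator `D_t`. -/
noncomputable def Dt (t : ℕ) (g : YoungDiagram → ℚ) (μ : YoungDiagram) : ℚ :=
  (∑ᶠ ν ∈ {ν : YoungDiagram | AddHook t μ ν}, g ν) - g μ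

/-- `P_g(n) = Σ_{λ ≥_t μ, |λ/μ| = nt} F_{λ/μ} g(λ)`. -/
noncomputable def Pg (t : ℕ) (μ : YoungDiagram) (g : YoungDiagram → ℚ) (n : ℕ) : ℚ :=
  ∑ᶠ lam : YoungDiagram, (numChains t n μ lam : ℚ) * g lam

/-- `ν` is obtained from `μ` by adding a single box. -/
def AddBox (μ ν : YoungDiagram) : Prop :=
  ∃ cell : ℕ × ℕ, cell ∉ μ.cells ∧ ν.cells = insert cell μ.cells

/-- `ν` is obtained from `μ` by adding a single box of content `k`. -/
def AddBoxAt (μ ν : YoungDiagram) (k : ℤ) : Prop :=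
  ∃ cell : ℕ × ℕ, cell ∉ μ.cells ∧ ν.cells = insert cell μ.cells ∧ content cell = k

/-- `μ` has an inner corner of content `k` (a box of content `k` can be added). -/
def InnerCorner (μ : YoungDiagram) (k : ℤ) : Prop :=
  ∃ ν : YoungDiagram, AddBoxAt μ ν k

/-- `μ` has an outer corner of content `k` (a box of content `k` can be removed). -/
def OuterCorner (μ : YoungDiagram) (k : ℤ) : Prop :=
  ∃ ν : YoungDiagram, AddBoxAt ν μ k

/-- `x 0 < x 1 < ⋯ < x m` are the contents of the inner corners of `μ` and
`y 1 < ⋯ < y m` those of the outer corners. -/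
def CornerData (μ : YoungDiagram) (m : ℕ) (x y : ℕ → ℤ) : Prop :=
  (∀ k : ℤ, InnerCorner μ k ↔ ∃ i ≤ m, x i = k) ∧
  (∀ k : ℤ, OuterCorner μ k ↔ ∃ j, 1 ≤ j ∧ j ≤ m ∧ y j = k) ∧
  (∀ i j, i < j → j ≤ m → x i < x j) ∧
  (∀ i j, 1 ≤ i → i < j → j ≤ m → y i < y j)

/-- `q_k = Σ_{i=0}^m x_i^k − Σ_{j=1}^m y_j^k`. -/
def qPow (m : ℕ) (x y : ℕ → ℤ) (k : ℕ) : ℤ :=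
  (∑ i ∈ range (m + 1), x i ^ k) - ∑ j ∈ range m, y (j + 1) ^ k

/-- Size of the `i`-th `t`-quotient of `lam`: boxes of `λ^i` correspond to
pairs `i' < j'` with `i' ≡ j' ≡ i (mod t)`, `z_{i'} = 1`, `z_{j'} = 0`. -/
noncomputable def quotientSize (t : ℕ) (lam : YoungDiagram) (i : ℕ) : ℕ :=
  Set.ncard {p : ℤ × ℤ | p.1 < p.2 ∧ p.1 % (t : ℤ) = (i : ℤ) ∧ p.2 % (t : ℤ) = (i : ℤ) ∧
    ZOne lam p.1 ∧ ¬ ZOne lam p.2}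

/-- The multiset of contents of the boxes of `μ`. -/
def contentsMultiset (μ : YoungDiagram) : Multiset ℤ :=
  μ.cells.val.map content

/-- The number of standard Young tableaux of shape `μ`, given by the
hook length formula `f_μ = |μ|! / H_μ`. -/
def fSYT (μ : YoungDiagram) : ℚ :=
  (Nat.factorial μ.card : ℚ) / Hprod μ

end PaperDefs

open PaperDefs


section Aux
open Polynomial




lemma leadingCoeff_lagrange_basis {s : Finset ℕ} {v : ℕ → ℚ} (hvs : Set.InjOn v s)
    {i : ℕ} (hi : i ∈ s) :
    (Lagrange.basis s v i).coeff (s.card - 1) = Lagrange.nodalWeight s v i := by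
  have hne : ∀ j ∈ s.erase i, v i ≠ v j := by
    intro j hj
    rcases mem_erase.mp hj with ⟨hij, hj⟩
    exact fun h => hij (hvs hj hi h.symm)
  have hd : (Lagrange.basis s v i).natDegree = s.card - 1 := Lagrange.natDegree_basis hvs hi
  rw [← hd, Polynomial.coeff_natDegree]
  unfold Lagrange.basis Lagrange.nodalWeight
  rw [Polynomial.leadingCoeff_prod]
  refine prod_congr rfl fun j hj => ?_
  unfold Lagrange.basisDivisor
  rw [leadingCoeff_mul, leadingCoeff_C, (monic_X_sub_C (v j)).leadingCoeff, mul_one]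

lemma lagrange_sum_eval_mul_nodalWeight {s : Finset ℕ} {v : ℕ → ℚ} (hvs : Set.InjOn v s)
    (f : Polynomial ℚ) (hdeg : f.degree < s.card) :
    ∑ i ∈ s, f.eval (v i) * Lagrange.nodalWeight s v i = f.coeff (s.card - 1) := by
  conv_rhs => rw [Lagrange.eq_interpolate hvs hdeg]
  rw [Lagrange.interpolate_apply, Polynomial.finset_sum_coeff]
  refine sum_congr rfl fun i hi => ?_
  rw [Polynomial.coeff_C_mul, leadingCoeff_lagrange_basis hvs hi]

lemma key_sum (N : ℕ) (hN : 1 ≤ N) (b : ℕ → ℚ)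
    (hdec : ∀ i j : ℕ, i < j → j < N → b j < b i)
    (hlast : b (N - 1) = 0) (hpos : ∀ i, i < N → 0 ≤ b i) :
    ∑ r ∈ range N, (∏ j ∈ (range N).erase r, (b r + 1 - b j)) *
      ((b r + 1) * ∏ j ∈ (range N).erase r, (b r - b j))⁻¹ = 1 := by
  set v : ℕ → ℚ := fun k => if k < N then b k else -1 with hv
  have hvs : Set.InjOn v (range (N + 1)) := by
    intro i hi j hj hij
    simp only [coe_range, Set.mem_Iio] at hi hj
    by_contra hne
    rcases Nat.lt_or_ge i N with hiN | hiN <;> rcases Nat.lt_or_ge j N with hjN | hjN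
    · simp only [hv, hiN, hjN, if_pos] at hij
      rcases Nat.lt_or_ge i j with h | h
      · exact absurd hij (ne_of_gt (hdec i j h hjN))
      · exact absurd hij (ne_of_lt (hdec j i (lt_of_le_of_ne h (Ne.symm hne)) hiN))
    · simp only [hv, hiN, if_pos, if_neg (Nat.not_lt.mpr hjN)] at hij
      linarith [hpos i hiN]
    · simp only [hv, hjN, if_pos, if_neg (Nat.not_lt.mpr hiN)] at hij
      linarith [hpos j hjN]
    · exact hne (by omega)
  set f : Polynomial ℚ := Lagrange.nodal (range N) (fun j => b j - 1) with hf
  have hdeg : f.degree < (range (N + 1)).card := by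
    rw [hf, Lagrange.degree_nodal, card_range, card_range]
    exact_mod_cast Nat.lt_succ_self N
  have hcoeff : f.coeff ((range (N + 1)).card - 1) = 1 := by
    rw [card_range, Nat.add_sub_cancel]
    have : f.natDegree = N := by rw [hf, Lagrange.natDegree_nodal, card_range]
    rw [← this]
    exact Lagrange.nodal_monic.coeff_natDegree
  have hmain := lagrange_sum_eval_mul_nodalWeight hvs f hdeg
  rw [hcoeff] at hmain
  rw [Finset.sum_range_succ] at hmain
  have hevalN : f.eval (v N) = 0 := by
    have : v N = -1 := by simp [hv]
    rw [this, hf, Lagrange.eval_nodal]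
    refine prod_eq_zero (mem_range.mpr (by omega : N - 1 < N)) ?_
    rw [hlast]; ring
  rw [hevalN, zero_mul, add_zero] at hmain
  refine Eq.trans (sum_congr rfl fun r hr => ?_) hmain
  rw [mem_range] at hr
  have hvr : v r = b r := by simp [hv, hr]
  have heval : f.eval (v r) = ∏ j ∈ (range N).erase r, (b r + 1 - b j) := by
    rw [hvr, hf, Lagrange.eval_nodal]
    rw [← Finset.prod_erase_mul _ _ (mem_range.mpr hr)]
    have : b r - (b r - 1) = 1 := by ring
    rw [this, mul_one]
    exact prod_congr rfl fun j _ => by ring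
  have hw : Lagrange.nodalWeight (range (N + 1)) v r =
      ((b r + 1) * ∏ j ∈ (range N).erase r, (b r - b j))⁻¹ := by
    unfold Lagrange.nodalWeight
    have hrmem : r ∈ range (N + 1) := mem_range.mpr (by omega)
    have hsplit : (range (N + 1)).erase r = insert N ((range N).erase r) := by
      ext x
      simp only [mem_erase, mem_range, mem_insert]
      omega
    have hnot : N ∉ (range N).erase r := fun h => absurd (mem_of_mem_erase h) (by simp)
    calc ∏ j ∈ (range (N + 1)).erase r, (v r - v j)⁻¹
        = ∏ j ∈ insert N ((range N).erase r), (v r - v j)⁻¹ := by rw [hsplit]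
      _ = (v r - v N)⁻¹ * ∏ j ∈ (range N).erase r, (v r - v j)⁻¹ := prod_insert hnot
      _ = (b r + 1)⁻¹ * ∏ j ∈ (range N).erase r, (b r - b j)⁻¹ := by
          have hvN : v N = -1 := by simp [hv]
          rw [hvr, hvN, sub_neg_eq_add]
          congr 1
          refine prod_congr rfl fun j hj => ?_
          rcases mem_erase.mp hj with ⟨_, hj⟩
          rw [show v j = b j by simp [hv, mem_range.mp hj]]
      _ = ((b r + 1) * ∏ j ∈ (range N).erase r, (b r - b j))⁻¹ := by
          rw [mul_inv, prod_inv_distrib]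
  rw [heval, hw]




lemma inner_split (N r : ℕ) (hr : r < N) (w : ℕ → ℚ) (i : ℕ) (hi : i ≠ r) :
    ∏ j ∈ Ico (i + 1) N, (w i - w j)
      = (if i < r then (w i - w r) else 1) * ∏ j ∈ (Ico (i + 1) N).erase r, (w i - w j) := by
  by_cases hir : i < r
  · rw [if_pos hir]
    exact (Finset.mul_prod_erase _ _ (mem_Ico.mpr ⟨by omega, hr⟩)).symm
  · rw [if_neg hir, one_mul, Finset.erase_eq_of_notMem]
    simp only [mem_Ico]
    omega

lemma erase_range_split (N r : ℕ) (hr : r < N) :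
    (range N).erase r = range r ∪ Ico (r + 1) N := by
  ext x
  simp only [mem_erase, mem_range, mem_union, mem_Ico]
  omega

lemma prod_pairs_exchange (N r : ℕ) (hr : r < N) (u v : ℕ → ℚ)
    (huv : ∀ i, i ≠ r → u i = v i) :
    (∏ i ∈ range N, ∏ j ∈ Ico (i + 1) N, (u i - u j)) *
      ∏ j ∈ (range N).erase r, (v r - v j)
    = (∏ i ∈ range N, ∏ j ∈ Ico (i + 1) N, (v i - v j)) *
      ∏ j ∈ (range N).erase r, (u r - u j) := by
  have hrr : r ∈ range N := mem_range.mpr hr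
  have hdisj : Disjoint (range r) (Ico (r + 1) N) := by
    rw [Finset.disjoint_left]
    intro x hx1 hx2
    simp only [mem_range] at hx1
    simp only [mem_Ico] at hx2
    omega
  -- outer split for a general w
  have houter : ∀ w : ℕ → ℚ, (∏ i ∈ range N, ∏ j ∈ Ico (i + 1) N, (w i - w j))
      = (∏ j ∈ Ico (r + 1) N, (w r - w j)) *
        ((∏ i ∈ (range N).erase r, (if i < r then (w i - w r) else 1)) *
         ∏ i ∈ (range N).erase r, ∏ j ∈ (Ico (i + 1) N).erase r, (w i - w j)) := by
    intro w
    rw [← Finset.mul_prod_erase (range N) _ hrr, ← Finset.prod_mul_distrib]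
    congr 1
    refine Finset.prod_congr rfl fun i hi => ?_
    exact inner_split N r hr w i (mem_erase.mp hi).1
  have hite : ∀ w : ℕ → ℚ, (∏ i ∈ (range N).erase r, (if i < r then (w i - w r) else 1))
      = ∏ i ∈ range r, (w i - w r) := by
    intro w
    rw [← Finset.prod_filter]
    congr 1
    ext x
    simp only [mem_filter, mem_erase, mem_range]
    omega
  rw [houter u, houter v, hite u, hite v]
  -- replace u by v where possible
  have h1 : ∏ j ∈ Ico (r + 1) N, (u r - u j) = ∏ j ∈ Ico (r + 1) N, (u r - v j) :=
    Finset.prod_congr rfl fun j hj => by rw [huv j (by have := (mem_Ico.mp hj).1; omega)]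
  have h2 : ∏ i ∈ range r, (u i - u r) = ∏ i ∈ range r, (v i - u r) :=
    Finset.prod_congr rfl fun i hi => by rw [huv i (by have := mem_range.mp hi; omega)]
  have h3 : ∏ i ∈ (range N).erase r, ∏ j ∈ (Ico (i + 1) N).erase r, (u i - u j)
      = ∏ i ∈ (range N).erase r, ∏ j ∈ (Ico (i + 1) N).erase r, (v i - v j) := by
    refine Finset.prod_congr rfl fun i hi => Finset.prod_congr rfl fun j hj => ?_
    rw [huv i (mem_erase.mp hi).1, huv j (mem_erase.mp hj).1]
  have h4 : ∏ j ∈ (range N).erase r, (v r - v j)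
      = (∏ i ∈ range r, (v r - v i)) * ∏ j ∈ Ico (r + 1) N, (v r - v j) := by
    rw [erase_range_split N r hr, Finset.prod_union hdisj]
  have h5 : ∏ j ∈ (range N).erase r, (u r - u j)
      = (∏ i ∈ range r, (u r - v i)) * ∏ j ∈ Ico (r + 1) N, (u r - v j) := by
    have h5' : ∏ j ∈ (range N).erase r, (u r - u j)
        = ∏ j ∈ (range N).erase r, (u r - v j) :=
      Finset.prod_congr rfl fun j hj => by rw [huv j (mem_erase.mp hj).1]
    rw [h5', erase_range_split N r hr, Finset.prod_union hdisj]
  rw [h1, h2, h3, h4, h5]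
  have hkey : (∏ i ∈ range r, (v i - u r)) * ∏ i ∈ range r, (v r - v i)
      = (∏ i ∈ range r, (v i - v r)) * ∏ i ∈ range r, (u r - v i) := by
    rw [← Finset.prod_mul_distrib, ← Finset.prod_mul_distrib]
    exact Finset.prod_congr rfl fun i _ => by ring
  -- now pure commutative algebra on atoms
  set A := ∏ j ∈ Ico (r + 1) N, (u r - v j)
  set B := ∏ j ∈ Ico (r + 1) N, (v r - v j)
  set C := ∏ i ∈ (range N).erase r, ∏ j ∈ (Ico (i + 1) N).erase r, (v i - v j)
  set P1 := ∏ i ∈ range r, (v i - u r)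
  set P2 := ∏ i ∈ range r, (v r - v i)
  set P3 := ∏ i ∈ range r, (v i - v r)
  set P4 := ∏ i ∈ range r, (u r - v i)
  calc A * (P1 * C) * (P2 * B) = (P1 * P2) * (A * B * C) := by ring
    _ = (P3 * P4) * (A * B * C) := by rw [hkey]
    _ = B * (P3 * C) * (P4 * A) := by ring

end Aux




namespace HookAux

lemma rowLen_eq_of {ν : YoungDiagram} {i L : ℕ} (h : ∀ j, (i, j) ∈ ν ↔ j < L) :
    ν.rowLen i = L := by
  refine Nat.le_antisymm ?_ ?_
  · by_contra hc
    push_neg at hc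
    exact absurd ((h L).mp (YoungDiagram.mem_iff_lt_rowLen.mpr hc)) (lt_irrefl L)
  · by_contra hc
    push_neg at hc
    exact absurd (YoungDiagram.mem_iff_lt_rowLen.mp ((h (ν.rowLen i)).mpr hc))
      (lt_irrefl _)

lemma colLen_eq_of {ν : YoungDiagram} {j L : ℕ} (h : ∀ i, (i, j) ∈ ν ↔ i < L) :
    ν.colLen j = L := by
  refine Nat.le_antisymm ?_ ?_
  · by_contra hc
    push_neg at hc
    exact absurd ((h L).mp (YoungDiagram.mem_iff_lt_colLen.mpr hc)) (lt_irrefl L)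
  · by_contra hc
    push_neg at hc
    exact absurd (YoungDiagram.mem_iff_lt_colLen.mp ((h (ν.colLen j)).mpr hc))
      (lt_irrefl _)

/-- Row `r` can receive a new box at the end. -/
def Addable (μ : YoungDiagram) (r : ℕ) : Prop :=
  r = 0 ∨ μ.rowLen r < μ.rowLen (r - 1)

instance (μ : YoungDiagram) (r : ℕ) : Decidable (Addable μ r) := by
  unfold Addable; infer_instance

/-- The Young diagram obtained by adding a box at the end of row `r`. -/
def addCell (μ : YoungDiagram) (r : ℕ) (h : Addable μ r) : YoungDiagram where
  cells := insert (r, μ.rowLen r) μ.cells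
  isLowerSet := by
    intro x y hyx hx
    simp only [coe_insert, Set.mem_insert_iff] at hx ⊢
    obtain ⟨hy1, hy2⟩ : y.1 ≤ x.1 ∧ y.2 ≤ x.2 := ⟨hyx.1, hyx.2⟩
    rcases hx with hx | hx
    · rcases Nat.lt_or_ge y.2 (μ.rowLen r) with hlt | hge
      · right
        have : (y.1, y.2) ∈ μ := YoungDiagram.mem_iff_lt_rowLen.mpr
          (lt_of_lt_of_le hlt (μ.rowLen_anti _ _ (by rw [hx] at hy1; exact hy1)))
        simpa using this
      · have hy2' : y.2 = μ.rowLen r := le_antisymm (by rw [hx] at hy2; exact hy2) hge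
        rcases Nat.eq_or_lt_of_le (show y.1 ≤ r by rw [hx] at hy1; exact hy1) with he | hlt
        · left
          rw [Prod.ext_iff]
          exact ⟨he, hy2'⟩
        · right
          rcases h with h0 | hr
          · omega
          · have : (y.1, y.2) ∈ μ := by
              rw [YoungDiagram.mem_iff_lt_rowLen, hy2']
              calc μ.rowLen r < μ.rowLen (r - 1) := hr
                _ ≤ μ.rowLen y.1 := μ.rowLen_anti _ _ (by omega)
            simpa using this
    · right
      exact μ.isLowerSet hyx hx

lemma mem_addCell {μ : YoungDiagram} {r : ℕ} (h : Addable μ r) {c : ℕ × ℕ} :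
    c ∈ addCell μ r h ↔ c = (r, μ.rowLen r) ∨ c ∈ μ := by
  change c ∈ (insert (r, μ.rowLen r) μ.cells) ↔ _
  simp [YoungDiagram.mem_cells]

lemma rowLen_addCell {μ : YoungDiagram} {r : ℕ} (h : Addable μ r) (i : ℕ) :
    (addCell μ r h).rowLen i = μ.rowLen i + if i = r then 1 else 0 := by
  refine rowLen_eq_of fun j => ?_
  rw [mem_addCell h]
  by_cases hir : i = r
  · subst hir
    simp only [if_true, eq_self_iff_true, Prod.mk.injEq, true_and,
      YoungDiagram.mem_iff_lt_rowLen]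
    omega
  · simp only [if_neg hir, Prod.mk.injEq, YoungDiagram.mem_iff_lt_rowLen]
    omega

lemma colLen_rowLen_addable {μ : YoungDiagram} {r : ℕ} (h : Addable μ r) :
    μ.colLen (μ.rowLen r) = r := by
  refine colLen_eq_of fun i => ?_
  rw [YoungDiagram.mem_iff_lt_rowLen]
  constructor
  · intro hi
    by_contra hc
    push_neg at hc
    exact absurd (lt_of_lt_of_le hi (μ.rowLen_anti _ _ hc)) (lt_irrefl _)
  · intro hi
    rcases h with h0 | hr
    · omega
    · calc μ.rowLen r < μ.rowLen (r - 1) := hr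
        _ ≤ μ.rowLen i := μ.rowLen_anti _ _ (by omega)

lemma colLen_addCell {μ : YoungDiagram} {r : ℕ} (h : Addable μ r) (j : ℕ) :
    (addCell μ r h).colLen j = μ.colLen j + if j = μ.rowLen r then 1 else 0 := by
  refine colLen_eq_of fun i => ?_
  rw [mem_addCell h]
  by_cases hj : j = μ.rowLen r
  · subst hj
    simp only [if_true, eq_self_iff_true, Prod.mk.injEq, and_true,
      YoungDiagram.mem_iff_lt_colLen, colLen_rowLen_addable h]
    omega
  · simp only [if_neg hj, Prod.mk.injEq, YoungDiagram.mem_iff_lt_colLen]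
    omega


/-- Remove the top row of a Young diagram. -/
def stripRow (μ : YoungDiagram) : YoungDiagram where
  cells := (μ.cells.filter (fun c => 1 ≤ c.1)).image (fun c => (c.1 - 1, c.2))
  isLowerSet := by
    intro x y hyx hx
    simp only [coe_image, coe_filter, Set.mem_image, Set.mem_setOf_eq] at hx ⊢
    obtain ⟨c, ⟨hc, hc1⟩, hcx⟩ := hx
    refine ⟨(y.1 + 1, y.2), ⟨?_, by omega⟩, by simp⟩
    have hle : (y.1 + 1, y.2) ≤ c := by
      constructor
      · simp only []
        have : x.1 = c.1 - 1 := by rw [← hcx]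
        have h1 := hyx.1
        have h2 := hyx.2
        omega
      · simp only []
        have : x.2 = c.2 := by rw [← hcx]
        have h2 := hyx.2
        omega
    exact μ.isLowerSet hle (by simpa using hc)

lemma mem_stripRow {μ : YoungDiagram} {c : ℕ × ℕ} :
    c ∈ stripRow μ ↔ (c.1 + 1, c.2) ∈ μ := by
  change c ∈ Finset.image _ _ ↔ _
  simp only [mem_image, mem_filter]
  constructor
  · rintro ⟨d, ⟨hd, hd1⟩, hdc⟩
    have h1 : c.1 = d.1 - 1 := by rw [← hdc]
    have h2 : c.2 = d.2 := by rw [← hdc]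
    have : (c.1 + 1, c.2) = d := by
      rw [Prod.ext_iff]; constructor <;> simp <;> omega
    rw [this]
    simpa using hd
  · intro h
    exact ⟨(c.1 + 1, c.2), ⟨by simpa using h, by simp⟩, by simp⟩

lemma rowLen_stripRow {μ : YoungDiagram} (i : ℕ) :
    (stripRow μ).rowLen i = μ.rowLen (i + 1) := by
  refine rowLen_eq_of fun j => ?_
  rw [show ((i, j) : ℕ × ℕ) ∈ stripRow μ ↔ (i + 1, j) ∈ μ from mem_stripRow]
  exact YoungDiagram.mem_iff_lt_rowLen

lemma colLen_stripRow {μ : YoungDiagram} (j : ℕ) :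
    (stripRow μ).colLen j = μ.colLen j - 1 := by
  refine colLen_eq_of fun i => ?_
  rw [show ((i, j) : ℕ × ℕ) ∈ stripRow μ ↔ (i + 1, j) ∈ μ from mem_stripRow,
    YoungDiagram.mem_iff_lt_colLen]
  omega


/-- Local hook length (same as PaperDefs.hookLen). -/
def hk (μ : YoungDiagram) (i j : ℕ) : ℕ :=
  (μ.rowLen i - j) + (μ.colLen j - i) - 1

/-- Product of all hook lengths, in ℕ. -/
def Hn (μ : YoungDiagram) : ℕ := ∏ c ∈ μ.cells, hk μ c.1 c.2

/-- β-numbers. -/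
def bet (μ : YoungDiagram) (N i : ℕ) : ℕ := μ.rowLen i + (N - 1 - i)

lemma prod_range_sub_eq_factorial (n : ℕ) : ∏ v ∈ range n, (n - v) = Nat.factorial n := by
  induction n with
  | zero => simp
  | succ m ih =>
    rw [Finset.prod_range_succ']
    have h2 : ∏ k ∈ range m, (m + 1 - (k + 1)) = Nat.factorial m := by
      rw [← ih]
      exact Finset.prod_congr rfl fun v _ => by omega
    rw [h2, Nat.factorial_succ, Nat.sub_zero, Nat.mul_comm]

lemma row0_lemma (μ : YoungDiagram) (N : ℕ) (hcol : μ.colLen 0 ≤ N + 1) :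
    (∏ j ∈ range (μ.rowLen 0), hk μ 0 j) *
      (∏ i ∈ Ico 1 (N + 1), (μ.rowLen 0 + N - bet μ (N + 1) i)) =
    Nat.factorial (μ.rowLen 0 + N) := by
  set L := μ.rowLen 0 with hL
  set B := L + N with hB
  have hcolmem : ∀ j, j < L → 1 ≤ μ.colLen j ∧ μ.colLen j ≤ N + 1 := by
    intro j hj
    constructor
    · have : (0, j) ∈ μ := YoungDiagram.mem_iff_lt_rowLen.mpr hj
      have := YoungDiagram.mem_iff_lt_colLen.mp this
      omega
    · exact le_trans (μ.colLen_anti 0 j (Nat.zero_le j)) hcol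
  set a : ℕ → ℕ := fun j => j + (N + 1 - μ.colLen j) with ha
  -- a is strictly monotone on range L
  have hamono : ∀ j j', j < j' → j' < L → a j < a j' := by
    intro j j' hjj hj'
    have h1 := hcolmem j (by omega)
    have h2 := hcolmem j' hj'
    have h3 : μ.colLen j' ≤ μ.colLen j := μ.colLen_anti j j' (le_of_lt hjj)
    simp only [ha]
    omega
  -- bet is strictly antitone
  have hbanti : ∀ i i', i < i' → i' ≤ N → bet μ (N + 1) i' < bet μ (N + 1) i := by
    intro i i' hii hi'N
    have h3 : μ.rowLen i' ≤ μ.rowLen i := μ.rowLen_anti i i' (le_of_lt hii)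
    unfold bet
    omega
  -- disjointness of values
  have hdisj : ∀ j, j < L → ∀ i, 1 ≤ i → i ≤ N → a j ≠ bet μ (N + 1) i := by
    intro j hj i hi1 hi2
    have h1 := hcolmem j hj
    by_cases hic : i < μ.colLen j
    · have hjr : j < μ.rowLen i := YoungDiagram.mem_iff_lt_rowLen.mp
        (YoungDiagram.mem_iff_lt_colLen.mpr hic)
      simp only [ha]; unfold bet
      omega
    · push_neg at hic
      have hjr : μ.rowLen i ≤ j := by
        by_contra hc
        push_neg at hc
        exact absurd (YoungDiagram.mem_iff_lt_colLen.mp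
          (YoungDiagram.mem_iff_lt_rowLen.mpr hc)) (by omega)
      simp only [ha]; unfold bet
      omega
  -- the two images
  set S1 : Finset ℕ := (range L).image a with hS1
  set S2 : Finset ℕ := (Ico 1 (N + 1)).image (bet μ (N + 1)) with hS2
  have hinj1 : ∀ x ∈ range L, ∀ y ∈ range L, a x = a y → x = y := by
    intro x hx y hy hxy
    rw [mem_range] at hx hy
    rcases Nat.lt_trichotomy x y with h | h | h
    · exact absurd hxy (Nat.ne_of_lt (hamono x y h hy))
    · exact h
    · exact absurd hxy.symm (Nat.ne_of_lt (hamono y x h hx))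
  have hinj2 : ∀ x ∈ Ico 1 (N + 1), ∀ y ∈ Ico 1 (N + 1),
      bet μ (N + 1) x = bet μ (N + 1) y → x = y := by
    intro x hx y hy hxy
    rw [mem_Ico] at hx hy
    rcases Nat.lt_trichotomy x y with h | h | h
    · exact absurd hxy.symm (Nat.ne_of_lt (hbanti x y h (by omega)))
    · exact h
    · exact absurd hxy (Nat.ne_of_lt (hbanti y x h (by omega)))
  have hdisjS : Disjoint S1 S2 := by
    rw [Finset.disjoint_left]
    intro x hx1 hx2
    simp only [hS1, hS2, mem_image, mem_range, mem_Ico] at hx1 hx2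
    obtain ⟨j, hj, haj⟩ := hx1
    obtain ⟨i, ⟨hi1, hi2⟩, hbi⟩ := hx2
    exact hdisj j hj i hi1 (by omega) (by rw [haj, hbi])
  have hsub : S1 ∪ S2 ⊆ range B := by
    intro x hx
    rw [mem_union] at hx
    rw [mem_range]
    rcases hx with hx | hx
    · simp only [hS1, mem_image, mem_range] at hx
      obtain ⟨j, hj, haj⟩ := hx
      have h1 := hcolmem j hj
      simp only [ha] at haj
      omega
    · simp only [hS2, mem_image, mem_Ico] at hx
      obtain ⟨i, ⟨hi1, hi2⟩, hbi⟩ := hx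
      have h3 : μ.rowLen i ≤ L := μ.rowLen_anti 0 i (Nat.zero_le i)
      rw [← hbi]
      unfold bet
      omega
  have hcard : (S1 ∪ S2).card = B := by
    rw [card_union_of_disjoint hdisjS, hS1, hS2, card_image_of_injOn hinj1,
      card_image_of_injOn hinj2, card_range, Nat.card_Ico]
    omega
  have hunion : S1 ∪ S2 = range B := by
    apply Finset.eq_of_subset_of_card_le hsub
    rw [hcard, card_range]
  -- factorial as a product
  have hfact : ∏ v ∈ range B, (B - v) = Nat.factorial B := prod_range_sub_eq_factorial B
  rw [← hfact, ← hunion, Finset.prod_union hdisjS, hS1, hS2,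
    Finset.prod_image hinj1, Finset.prod_image hinj2]
  congr 1
  refine Finset.prod_congr rfl fun j hj => ?_
  rw [mem_range] at hj
  have h1 := hcolmem j hj
  have hrow : j < μ.rowLen 0 := hj
  unfold hk
  simp only [ha, Nat.sub_zero]
  omega


lemma hk_strip {μ : YoungDiagram} {c : ℕ × ℕ} (hc : c ∈ (stripRow μ).cells) :
    hk μ (c.1 + 1) c.2 = hk (stripRow μ) c.1 c.2 := by
  have hm : (c.1 + 1, c.2) ∈ μ := mem_stripRow.mp (by simpa using hc)
  have h1 := YoungDiagram.mem_iff_lt_colLen.mp hm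
  unfold hk
  rw [rowLen_stripRow, colLen_stripRow]
  omega

lemma Hn_eq_row0_mul_strip (μ : YoungDiagram) :
    Hn μ = (∏ j ∈ range (μ.rowLen 0), hk μ 0 j) * Hn (stripRow μ) := by
  have hcells : μ.cells =
      ({0} ×ˢ range (μ.rowLen 0)) ∪ (stripRow μ).cells.image (fun c => (c.1 + 1, c.2)) := by
    ext c
    obtain ⟨i, j⟩ := c
    simp only [mem_union, mem_product, mem_singleton, mem_range, mem_image]
    constructor
    · intro h
      rw [YoungDiagram.mem_cells] at h
      match i with
      | 0 => exact Or.inl ⟨rfl, YoungDiagram.mem_iff_lt_rowLen.mp h⟩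
      | k + 1 =>
        refine Or.inr ⟨(k, j), ?_, rfl⟩
        rw [YoungDiagram.mem_cells]
        exact mem_stripRow.mpr h
    · intro h
      rw [YoungDiagram.mem_cells]
      rcases h with ⟨hi, hj⟩ | ⟨d, hd, hdij⟩
      · subst hi
        exact YoungDiagram.mem_iff_lt_rowLen.mpr hj
      · have : (d.1 + 1, d.2) = (i, j) := hdij
        rw [← this]
        exact mem_stripRow.mp (by simpa using hd)
  have hdisj : Disjoint ({0} ×ˢ range (μ.rowLen 0))
      ((stripRow μ).cells.image (fun c => (c.1 + 1, c.2))) := by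
    rw [Finset.disjoint_left]
    rintro ⟨i, j⟩ h1 h2
    simp only [mem_product, mem_singleton] at h1
    simp only [mem_image] at h2
    obtain ⟨d, _, hd⟩ := h2
    have : d.1 + 1 = i := (Prod.ext_iff.mp hd).1
    omega
  unfold Hn
  rw [hcells, Finset.prod_union hdisj]
  congr 1
  · rw [Finset.prod_product]
    simp
  · have hinj : ∀ x ∈ (stripRow μ).cells, ∀ y ∈ (stripRow μ).cells,
        (fun c : ℕ × ℕ => (c.1 + 1, c.2)) x = (fun c : ℕ × ℕ => (c.1 + 1, c.2)) y → x = y := by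
      intro x _ y _ h
      simp only [Prod.ext_iff] at h
      exact Prod.ext_iff.mpr ⟨by omega, h.2⟩
    rw [Finset.prod_image hinj]
    exact Finset.prod_congr rfl fun c hc => hk_strip hc

lemma lemmaA : ∀ (N : ℕ) (μ : YoungDiagram), μ.colLen 0 ≤ N →
    Hn μ * ∏ i ∈ range N, ∏ j ∈ Ico (i + 1) N, (bet μ N i - bet μ N j)
      = ∏ i ∈ range N, Nat.factorial (bet μ N i) := by
  intro N
  induction N with
  | zero =>
    intro μ hcol
    have hempty : μ.cells = ∅ := by
      refine Finset.eq_empty_of_forall_notMem fun c hc => ?_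
      obtain ⟨i, j⟩ := c
      have h1 : i < μ.colLen j :=
        YoungDiagram.mem_iff_lt_colLen.mp ((YoungDiagram.mem_cells _).mp hc)
      have h2 := μ.colLen_anti 0 j (Nat.zero_le j)
      omega
    simp [Hn, hempty]
  | succ N ih =>
    intro μ hcol
    have hcol' : (stripRow μ).colLen 0 ≤ N := by rw [colLen_stripRow]; omega
    have IH := ih (stripRow μ) hcol'
    have hbet : ∀ i, bet μ (N + 1) (i + 1) = bet (stripRow μ) N i := by
      intro i
      unfold bet
      rw [rowLen_stripRow]
      omega
    have hbet0 : bet μ (N + 1) 0 = μ.rowLen 0 + N := by unfold bet; omega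
    have hsplitΔ : ∏ i ∈ range (N + 1), ∏ j ∈ Ico (i + 1) (N + 1),
          (bet μ (N + 1) i - bet μ (N + 1) j)
        = (∏ i ∈ range N, ∏ j ∈ Ico (i + 1) N,
            (bet (stripRow μ) N i - bet (stripRow μ) N j)) *
          ∏ j ∈ Ico 1 (N + 1), (bet μ (N + 1) 0 - bet μ (N + 1) j) := by
      rw [Finset.prod_range_succ']
      congr 1
      refine Finset.prod_congr rfl fun i _ => ?_
      rw [show Ico (i + 1 + 1) (N + 1) = Ico (i + 1 + 1) (N + 1) from rfl]
      rw [← Finset.prod_Ico_add' (fun j => bet μ (N + 1) (i + 1) - bet μ (N + 1) j) (i + 1) N 1]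
      exact Finset.prod_congr rfl fun j _ => by rw [hbet, hbet]
    rw [hsplitΔ, Hn_eq_row0_mul_strip μ]
    have hrow0 := row0_lemma μ N hcol
    calc (∏ j ∈ range (μ.rowLen 0), hk μ 0 j) * Hn (stripRow μ) *
          ((∏ i ∈ range N, ∏ j ∈ Ico (i + 1) N,
            (bet (stripRow μ) N i - bet (stripRow μ) N j)) *
          ∏ j ∈ Ico 1 (N + 1), (bet μ (N + 1) 0 - bet μ (N + 1) j))
        = (Hn (stripRow μ) * ∏ i ∈ range N, ∏ j ∈ Ico (i + 1) N,
            (bet (stripRow μ) N i - bet (stripRow μ) N j)) *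
          ((∏ j ∈ range (μ.rowLen 0), hk μ 0 j) *
           ∏ j ∈ Ico 1 (N + 1), (μ.rowLen 0 + N - bet μ (N + 1) j)) := by
          rw [hbet0]; ring
      _ = (∏ i ∈ range N, Nat.factorial (bet (stripRow μ) N i)) *
            Nat.factorial (μ.rowLen 0 + N) := by rw [IH, hrow0]
      _ = ∏ i ∈ range (N + 1), Nat.factorial (bet μ (N + 1) i) := by
          rw [Finset.prod_range_succ', hbet0]
          congr 1
          exact Finset.prod_congr rfl fun i _ => by rw [hbet]

lemma hookLen_eq_hk (μ : YoungDiagram) (i j : ℕ) : hookLen μ i j = hk μ i j := rfl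

lemma Hprod_eq_cast (μ : YoungDiagram) : Hprod μ = (Hn μ : ℚ) := by
  unfold Hprod Hn
  rw [Nat.cast_prod]
  exact Finset.prod_congr rfl fun c _ => by rw [hookLen_eq_hk]

lemma Hn_pos (μ : YoungDiagram) : 0 < Hn μ := by
  refine Finset.prod_pos fun c hc => ?_
  obtain ⟨i, j⟩ := c
  have h1 : j < μ.rowLen i :=
    YoungDiagram.mem_iff_lt_rowLen.mp ((YoungDiagram.mem_cells _).mp hc)
  have h2 : i < μ.colLen j :=
    YoungDiagram.mem_iff_lt_colLen.mp ((YoungDiagram.mem_cells _).mp hc)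
  show 0 < hk μ i j
  unfold hk
  omega

lemma bet_strict (μ : YoungDiagram) (N : ℕ) {i j : ℕ} (hij : i < j) (hj : j < N) :
    bet μ N j < bet μ N i := by
  have := μ.rowLen_anti i j (le_of_lt hij)
  unfold bet
  omega

lemma rowLen_colLen_zero (μ : YoungDiagram) : μ.rowLen (μ.colLen 0) = 0 := by
  refine rowLen_eq_of fun j => ⟨fun h => ?_, by omega⟩
  have h1 := YoungDiagram.mem_iff_lt_colLen.mp h
  have h2 := μ.colLen_anti 0 j (Nat.zero_le j)
  omega

lemma bet_addCell {μ : YoungDiagram} {r : ℕ} (h : Addable μ r) (N i : ℕ) :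
    bet (addCell μ r h) N i = bet μ N i + if i = r then 1 else 0 := by
  unfold bet
  rw [rowLen_addCell h i]
  ring

lemma colLen0_addCell {μ : YoungDiagram} {r : ℕ} (h : Addable μ r) :
    (addCell μ r h).colLen 0 ≤ μ.colLen 0 + 1 := by
  rw [colLen_addCell h 0]
  split <;> omega

lemma addBox_addCell {μ : YoungDiagram} {r : ℕ} (h : Addable μ r) :
    AddBox μ (addCell μ r h) := by
  refine ⟨(r, μ.rowLen r), ?_, rfl⟩
  rw [YoungDiagram.mem_cells, YoungDiagram.mem_iff_lt_rowLen]
  omega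

lemma addBox_iff {μ ν : YoungDiagram} :
    AddBox μ ν ↔ ∃ r, ∃ h : Addable μ r, r ≤ μ.colLen 0 ∧ ν = addCell μ r h := by
  constructor
  · rintro ⟨⟨i, j⟩, hcell, hcells⟩
    have hmemν : (i, j) ∈ ν := by
      rw [← YoungDiagram.mem_cells, hcells]
      exact mem_insert_self _ _
    have hge : μ.rowLen i ≤ j := by
      by_contra hc
      push_neg at hc
      exact hcell ((YoungDiagram.mem_cells _).mpr (YoungDiagram.mem_iff_lt_rowLen.mpr hc))
    have hle : j ≤ μ.rowLen i := by
      by_contra hc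
      push_neg at hc
      have hj1 : 1 ≤ j := by omega
      have h1 : (i, j - 1) ∈ ν := ν.up_left_mem (le_refl i) (by omega) hmemν
      have h2 : (i, j - 1) ∈ ν.cells := (YoungDiagram.mem_cells _).mpr h1
      rw [hcells, mem_insert] at h2
      rcases h2 with h2 | h2
      · rw [Prod.ext_iff] at h2
        simp only at h2
        omega
      · have := YoungDiagram.mem_iff_lt_rowLen.mp ((YoungDiagram.mem_cells _).mp h2)
        omega
    have hj : j = μ.rowLen i := le_antisymm hle hge
    subst hj
    have haddable : Addable μ i := by
      match i with
      | 0 => exact Or.inl rfl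
      | k + 1 =>
        refine Or.inr ?_
        have h1 : (k, μ.rowLen (k + 1)) ∈ ν := ν.up_left_mem (by omega) (le_refl _) hmemν
        have h2 : (k, μ.rowLen (k + 1)) ∈ ν.cells := (YoungDiagram.mem_cells _).mpr h1
        rw [hcells, mem_insert] at h2
        rcases h2 with h2 | h2
        · rw [Prod.ext_iff] at h2
          simp only at h2
          omega
        · have := YoungDiagram.mem_iff_lt_rowLen.mp ((YoungDiagram.mem_cells _).mp h2)
          simpa using this
    have hbound : i ≤ μ.colLen 0 := by
      match i with
      | 0 => exact Nat.zero_le _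
      | k + 1 =>
        rcases haddable with h0 | hlt
        · omega
        · have hpos : 0 < μ.rowLen k := by
            have : μ.rowLen (k + 1 - 1) = μ.rowLen k := by norm_num
            omega
          have : (k, 0) ∈ μ := YoungDiagram.mem_iff_lt_rowLen.mpr hpos
          have := YoungDiagram.mem_iff_lt_colLen.mp this
          omega
    exact ⟨i, haddable, hbound, YoungDiagram.ext hcells⟩
  · rintro ⟨r, h, _, rfl⟩
    exact addBox_addCell h

lemma addCell_inj {μ : YoungDiagram} {r r' : ℕ} (h : Addable μ r) (h' : Addable μ r')
    (he : addCell μ r h = addCell μ r' h') : r = r' := by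
  by_contra hne
  have h1 : (r, μ.rowLen r) ∈ addCell μ r h := (mem_addCell h).mpr (Or.inl rfl)
  rw [he] at h1
  rcases (mem_addCell h').mp h1 with heq | hmem
  · rw [Prod.ext_iff] at heq
    exact hne heq.1
  · rw [YoungDiagram.mem_iff_lt_rowLen] at hmem
    omega

end HookAux


open HookAux

theorem stmt7 (μ : YoungDiagram) :
    1 / Hprod μ = ∑ᶠ ν ∈ {ν : YoungDiagram | AddBox μ ν}, 1 / Hprod ν := by
  classical
  set N := μ.colLen 0 + 1 with hN
  set s : Finset ℕ := (range N).filter (fun r => Addable μ r) with hs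
  set F : ℕ → YoungDiagram := fun r => if h : Addable μ r then addCell μ r h else ⊥ with hF
  have hFr : ∀ r (h : Addable μ r), F r = addCell μ r h := by
    intro r h
    simp only [hF, dif_pos h]
  have hseteq : {ν : YoungDiagram | AddBox μ ν} = ↑(s.image F) := by
    ext ν
    simp only [Set.mem_setOf_eq, coe_image, Set.mem_image, mem_coe, hs, mem_filter, mem_range]
    constructor
    · intro h
      obtain ⟨r, hr, hrb, rfl⟩ := addBox_iff.mp h
      exact ⟨r, ⟨by omega, hr⟩, (hFr r hr).symm ▸ rfl⟩
    · rintro ⟨r, ⟨hrN, hr⟩, rfl⟩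
      rw [hFr r hr]
      exact addBox_addCell hr
  rw [hseteq, finsum_mem_coe_finset]
  have hinjF : ∀ x ∈ s, ∀ y ∈ s, F x = F y → x = y := by
    intro x hx y hy hxy
    rw [hs, mem_filter] at hx hy
    rw [hFr x hx.2, hFr y hy.2] at hxy
    exact addCell_inj hx.2 hy.2 hxy
  rw [Finset.sum_image hinjF]
  -- quantitative part
  set b : ℕ → ℚ := fun i => ((bet μ N i : ℕ) : ℚ) with hb
  have hN1 : 1 ≤ N := by omega
  have hbdec : ∀ i j : ℕ, i < j → j < N → b j < b i := by
    intro i j h1 h2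
    simp only [hb]
    exact_mod_cast bet_strict μ N h1 h2
  have hbpos : ∀ i, i < N → 0 ≤ b i := fun i _ => Nat.cast_nonneg _
  have hblast : b (N - 1) = 0 := by
    have h1 : N - 1 = μ.colLen 0 := by omega
    have h2 : bet μ N (μ.colLen 0) = 0 := by
      unfold bet
      rw [rowLen_colLen_zero]
      omega
    simp [hb, h1, h2]
  set Fq : ℚ := ∏ i ∈ range N, ((bet μ N i).factorial : ℚ) with hFq
  have hFqpos : 0 < Fq := Finset.prod_pos fun i _ => by exact_mod_cast Nat.factorial_pos _
  have hAq : ∀ ν : YoungDiagram, ν.colLen 0 ≤ N →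
      (Hn ν : ℚ) * ∏ i ∈ range N, ∏ j ∈ Ico (i + 1) N, ((bet ν N i : ℚ) - (bet ν N j : ℚ))
        = ∏ i ∈ range N, ((bet ν N i).factorial : ℚ) := by
    intro ν hcol
    have h := lemmaA N ν hcol
    have hcast : ∏ i ∈ range N, ∏ j ∈ Ico (i + 1) N, ((bet ν N i : ℚ) - (bet ν N j : ℚ))
        = ((∏ i ∈ range N, ∏ j ∈ Ico (i + 1) N, (bet ν N i - bet ν N j) : ℕ) : ℚ) := by
      rw [Nat.cast_prod]
      refine Finset.prod_congr rfl fun i hi => ?_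
      rw [Nat.cast_prod]
      refine Finset.prod_congr rfl fun j hj => ?_
      rw [mem_Ico] at hj
      rw [Nat.cast_sub (le_of_lt (bet_strict ν N (by omega) hj.2))]
    rw [hcast, ← Nat.cast_mul, h, Nat.cast_prod]
  have hAμ : (Hn μ : ℚ) * ∏ i ∈ range N, ∏ j ∈ Ico (i + 1) N, (b i - b j) = Fq :=
    hAq μ (by omega)
  set Δb : ℚ := ∏ i ∈ range N, ∏ j ∈ Ico (i + 1) N, (b i - b j) with hΔb
  have hHμ : (0:ℚ) < (Hn μ : ℚ) := by exact_mod_cast Hn_pos μ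
  have hΔbne : Δb ≠ 0 := by
    intro h0
    rw [h0, mul_zero] at hAμ
    exact (ne_of_gt hFqpos) hAμ.symm
  -- products over erased range
  have hPne : ∀ r, r < N → (∏ j ∈ (range N).erase r, (b r - b j)) ≠ 0 := by
    intro r hrN
    rw [Finset.prod_ne_zero_iff]
    intro j hj
    rcases mem_erase.mp hj with ⟨hjr, hjN⟩
    rw [mem_range] at hjN
    rcases Nat.lt_trichotomy j r with h | h | h
    · exact sub_ne_zero_of_ne (ne_of_lt (hbdec j r h hrN))
    · exact absurd h hjr
    · exact sub_ne_zero_of_ne (ne_of_gt (hbdec r j h hjN))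
  have hbr1pos : ∀ r, r < N → (0:ℚ) < b r + 1 := by
    intro r hrN
    have := hbpos r hrN
    linarith
  -- the per-term identity for addable rows
  have hterm : ∀ r ∈ s, 1 / Hprod (F r)
      = Δb / Fq * ((∏ j ∈ (range N).erase r, (b r + 1 - b j)) *
          ((b r + 1) * ∏ j ∈ (range N).erase r, (b r - b j))⁻¹) := by
    intro r hrs
    rw [hs, mem_filter, mem_range] at hrs
    obtain ⟨hrN, ha⟩ := hrs
    rw [hFr r ha]
    set ν := addCell μ r ha with hν
    have hc : ν.colLen 0 ≤ N := by
      rw [hν, hN]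
      exact colLen0_addCell ha
    set br : ℕ → ℚ := fun i => b i + if i = r then 1 else 0 with hbr
    have hbν : ∀ i, ((bet ν N i : ℕ) : ℚ) = br i := by
      intro i
      rw [hν, bet_addCell ha N i, hbr, hb]
      by_cases h : i = r <;> simp [h]
    have hAν := hAq ν hc
    have hΔcast : ∏ i ∈ range N, ∏ j ∈ Ico (i + 1) N, ((bet ν N i : ℚ) - (bet ν N j : ℚ))
        = ∏ i ∈ range N, ∏ j ∈ Ico (i + 1) N, (br i - br j) :=
      Finset.prod_congr rfl fun i _ => Finset.prod_congr rfl fun j _ => by rw [hbν, hbν]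
    have hFcast : ∏ i ∈ range N, ((bet ν N i).factorial : ℚ) = (b r + 1) * Fq := by
      rw [← Finset.mul_prod_erase (range N) _ (mem_range.mpr hrN), hFq,
        ← Finset.mul_prod_erase (range N) (fun i => ((bet μ N i).factorial : ℚ))
          (mem_range.mpr hrN)]
      have h1 : ((bet ν N r).factorial : ℚ) = (b r + 1) * ((bet μ N r).factorial : ℚ) := by
        rw [hν, bet_addCell ha N r, if_pos rfl, Nat.factorial_succ]
        push_cast [hb]
        ring
      have h2 : ∏ i ∈ (range N).erase r, ((bet ν N i).factorial : ℚ)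
          = ∏ i ∈ (range N).erase r, ((bet μ N i).factorial : ℚ) :=
        Finset.prod_congr rfl fun i hi => by
          rw [hν, bet_addCell ha N i, if_neg (mem_erase.mp hi).1, add_zero]
      rw [h1, h2]
      ring
    rw [hΔcast, hFcast] at hAν
    -- hAν : (Hn ν : ℚ) * Δ(br) = (b r + 1) * Fq
    have hex := prod_pairs_exchange N r hrN br b (fun i hi => by rw [hbr]; simp [hi])
    have hQ : ∏ j ∈ (range N).erase r, (br r - br j)
        = ∏ j ∈ (range N).erase r, (b r + 1 - b j) :=
      Finset.prod_congr rfl fun j hj => by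
        rw [hbr]
        simp [(mem_erase.mp hj).1]
    rw [hQ] at hex
    -- hex : Δ(br) * P = Δb * Q
    set Δbr := ∏ i ∈ range N, ∏ j ∈ Ico (i + 1) N, (br i - br j) with hΔbr
    set P := ∏ j ∈ (range N).erase r, (b r - b j) with hP
    set Q := ∏ j ∈ (range N).erase r, (b r + 1 - b j) with hQ2
    have hPn := hPne r hrN
    have hb1 := hbr1pos r hrN
    have hHν : (0:ℚ) < (Hn ν : ℚ) := by exact_mod_cast Hn_pos ν
    have hΔbrne : Δbr ≠ 0 := by
      intro h0
      rw [h0, mul_zero] at hAν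
      have : (0:ℚ) < (b r + 1) * Fq := by positivity
      rw [← hAν] at this
      exact lt_irrefl 0 this
    rw [← hΔb] at hex
    have h1 : Δbr = Δb * Q / P := by
      rw [eq_div_iff hPn]
      exact hex
    have h2 : (Hn ν : ℚ) = (b r + 1) * Fq / Δbr := by
      rw [eq_div_iff hΔbrne]
      exact hAν
    rw [Hprod_eq_cast, h2, one_div_div, h1]
    field_simp
  rw [Finset.sum_congr rfl hterm]
  -- extend the sum to all r < N
  have hext : ∑ r ∈ s, Δb / Fq * ((∏ j ∈ (range N).erase r, (b r + 1 - b j)) *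
          ((b r + 1) * ∏ j ∈ (range N).erase r, (b r - b j))⁻¹)
      = ∑ r ∈ range N, Δb / Fq * ((∏ j ∈ (range N).erase r, (b r + 1 - b j)) *
          ((b r + 1) * ∏ j ∈ (range N).erase r, (b r - b j))⁻¹) := by
    refine Finset.sum_subset (by rw [hs]; exact filter_subset _ _) ?_
    intro r hrN hrs
    rw [hs, mem_filter] at hrs
    rw [mem_range] at hrN
    have hna : ¬ Addable μ r := fun h => hrs ⟨mem_range.mpr hrN, h⟩
    unfold Addable at hna
    push_neg at hna
    obtain ⟨hr0, hle⟩ := hna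
    have heq : μ.rowLen (r - 1) = μ.rowLen r :=
      le_antisymm hle (μ.rowLen_anti _ _ (by omega))
    have hzero : b r + 1 - b (r - 1) = 0 := by
      have h1 : bet μ N (r - 1) = bet μ N r + 1 := by
        unfold bet
        rw [heq]
        omega
      rw [hb]
      push_cast [h1]
      ring
    have hQ0 : ∏ j ∈ (range N).erase r, (b r + 1 - b j) = 0 :=
      Finset.prod_eq_zero (mem_erase.mpr ⟨by omega, mem_range.mpr (by omega)⟩) hzero
    rw [hQ0]
    ring
  rw [hext, ← Finset.mul_sum,
    key_sum N hN1 b hbdec hblast hbpos, mul_one]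
  -- finally 1 / Hprod μ = Δb / Fq
  rw [Hprod_eq_cast, div_eq_div_iff (ne_of_gt hHμ) (ne_of_gt hFqpos)]
  linear_combination -hAμ
end

section
/- Let t be a positive integer, μ a t-core partition with parameters d_0,…,d_{t−1} (where b_i = t·d_i + i is the least index ≡ i mod t with z_{μ,b_i} = 1), and 1 ≤ k ≤ t−1. Let B_k be the multiset {(i,i+k) : 0 ≤ i ≤ t−1−k} ∪ {(i,i+t−k) : 0 ≤ i ≤ k−1}. Then the number of boxes of μ with hook length ≡ k (mod t) plus the number with hook length ≡ t−k (mod t) equals Σ_{(i,j)∈B_k} C(d_i − d_j, 2), where C(m,2) = m(m−1)/2 for any integer m (so C(m,2) = C(1−m,2) for m ≤ 0). -/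
open Finset

open PaperDefs

namespace StmtAux
open PaperDefs

/-- one positions -/
def uP (μ : YoungDiagram) (j : ℕ) : ℤ := (j : ℤ) - μ.colLen j
/-- zero positions -/
def vP (μ : YoungDiagram) (r : ℕ) : ℤ := (μ.rowLen r : ℤ) - (r + 1)

lemma mem_iff_uv {μ : YoungDiagram} {r j : ℕ} : (r, j) ∈ μ ↔ uP μ j < vP μ r := by
  constructor
  · intro h
    have h1 : j + 1 ≤ μ.rowLen r := YoungDiagram.mem_iff_lt_rowLen.mp h
    have h2 : r + 1 ≤ μ.colLen j := YoungDiagram.mem_iff_lt_colLen.mp h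
    simp only [uP, vP]; omega
  · intro h
    by_contra hm
    have h1 : μ.rowLen r ≤ j := by
      by_contra h1; exact hm (YoungDiagram.mem_iff_lt_rowLen.mpr (by omega))
    have h2 : μ.colLen j ≤ r := by
      by_contra h2; exact hm (YoungDiagram.mem_iff_lt_colLen.mpr (by omega))
    simp only [uP, vP] at h; omega

lemma uv_ne (μ : YoungDiagram) (r j : ℕ) : vP μ r ≠ uP μ j := by
  by_cases h : (r, j) ∈ μ
  · have := mem_iff_uv.mp h; omega
  · have h1 : μ.rowLen r ≤ j := by
      by_contra h1; exact h (YoungDiagram.mem_iff_lt_rowLen.mpr (by omega))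
    have h2 : μ.colLen j ≤ r := by
      by_contra h2; exact h (YoungDiagram.mem_iff_lt_colLen.mpr (by omega))
    simp only [uP, vP]; omega

lemma u_strictMono (μ : YoungDiagram) : StrictMono (uP μ) := by
  have hmono : ∀ j : ℕ, uP μ j + 1 ≤ uP μ (j + 1) := by
    intro j
    have := μ.colLen_anti j (j+1) (by omega)
    simp only [uP]; push_cast; omega
  exact strictMono_nat_of_lt_succ (fun n => by have := hmono n; omega)

lemma v_strictAnti (μ : YoungDiagram) : StrictAnti (vP μ) := by
  have h : ∀ r : ℕ, vP μ (r + 1) < vP μ r := by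
    intro r
    have := μ.rowLen_anti r (r+1) (by omega)
    simp only [vP]; push_cast; omega
  exact strictAnti_nat_of_succ_lt h

lemma not_zone_iff {μ : YoungDiagram} {y : ℤ} : ¬ ZOne μ y ↔ ∃ r : ℕ, vP μ r = y := by
  simp only [ZOne, not_forall, not_not, vP]
  constructor
  · rintro ⟨r, h⟩; exact ⟨r, h.symm⟩
  · rintro ⟨r, h⟩; exact ⟨r, h.symm⟩

lemma zone_iff_u {μ : YoungDiagram} {x : ℤ} : ZOne μ x ↔ ∃ j : ℕ, uP μ j = x := by
  constructor
  · intro h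
    by_cases hx : x < uP μ 0
    · exfalso
      have h0 : x ≤ -(μ.colLen 0 : ℤ) - 1 := by simp only [uP] at hx; push_cast at hx; omega
      set r : ℕ := (-x - 1).toNat with hr
      have hrge : (μ.colLen 0 : ℤ) ≤ r := by omega
      have hrow : μ.rowLen r = 0 := by
        by_contra hne
        have : (r, 0) ∈ μ := YoungDiagram.mem_iff_lt_rowLen.mpr (by omega)
        have := YoungDiagram.mem_iff_lt_colLen.mp this
        omega
      exact h r (by simp [hrow]; omega)
    · push_neg at hx
      have hbig : ∃ N : ℕ, x < uP μ N := by
        refine ⟨(x + 1 + μ.colLen 0).toNat, ?_⟩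
        have key : ∀ n : ℕ, uP μ 0 + n ≤ uP μ n := by
          intro n; induction n with
          | zero => simp
          | succ m ih =>
            have := u_strictMono μ (show m < m + 1 by omega)
            push_cast; omega
        have h2 := key (x + 1 + μ.colLen 0).toNat
        simp only [uP] at *
        push_cast at *
        omega
      obtain ⟨N, hN⟩ := hbig
      have hS : ∃ n, x < uP μ n := ⟨N, hN⟩
      classical
      set m := Nat.find hS with hm
      have hmlt : x < uP μ m := Nat.find_spec hS
      have hm0 : m ≠ 0 := by
        intro h0; rw [h0] at hmlt; omega
      obtain ⟨j, hj⟩ : ∃ j, m = j + 1 := ⟨m - 1, by omega⟩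
      rw [hj] at hmlt
      have hle : uP μ j ≤ x := by
        have := Nat.find_min hS (m := j) (by omega)
        omega
      rcases eq_or_lt_of_le hle with heq | hlt
      · exact ⟨j, heq⟩
      · exfalso
        -- uP j < x < uP (j+1); x = vP r for suitable r
        have hu1 : uP μ (j+1) = (j:ℤ) + 1 - μ.colLen (j+1) := by simp only [uP]; push_cast; ring
        have hu0 : uP μ j = (j:ℤ) - μ.colLen j := rfl
        -- s := x - uP j, 1 ≤ s ≤ colLen j - colLen (j+1)
        have hs1 : 1 ≤ x - uP μ j := by omega
        have hs2 : x - uP μ j ≤ (μ.colLen j : ℤ) - μ.colLen (j+1) := by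
          rw [hu0] at *; rw [hu1] at hmlt; omega
        set r : ℕ := (μ.colLen j : ℤ) - (x - uP μ j) |>.toNat with hrdef
        have hrlt : (r : ℤ) = (μ.colLen j : ℤ) - (x - uP μ j) := by omega
        have hmem : (r, j) ∈ μ := YoungDiagram.mem_iff_lt_colLen.mpr (by omega)
        have hrow1 : j + 1 ≤ μ.rowLen r := YoungDiagram.mem_iff_lt_rowLen.mp hmem
        have hnmem : (r, j + 1) ∉ μ := by
          intro hc
          have := YoungDiagram.mem_iff_lt_colLen.mp hc
          omega
        have hrow2 : μ.rowLen r ≤ j + 1 := by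
          by_contra hc
          exact hnmem (YoungDiagram.mem_iff_lt_rowLen.mpr (by omega))
        have : vP μ r = x := by
          simp only [vP]
          rw [hu0] at *
          omega
        exact (not_zone_iff.mpr ⟨r, this⟩) h
  · rintro ⟨j, rfl⟩ r
    exact fun h => uv_ne μ r j h.symm

lemma hook_eq {μ : YoungDiagram} {r j : ℕ} (h : (r, j) ∈ μ) :
    (hookLen μ r j : ℤ) = vP μ r - uP μ j := by
  have h1 : j + 1 ≤ μ.rowLen r := YoungDiagram.mem_iff_lt_rowLen.mp h
  have h2 : r + 1 ≤ μ.colLen j := YoungDiagram.mem_iff_lt_colLen.mp h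
  simp only [hookLen, vP, uP]
  push_cast
  omega



-- ℕ triangle counts
lemma card_TltN (n : ℕ) : (((range n) ×ˢ (range n)).filter (fun p => p.1 < p.2)).card = n.choose 2 := by
  induction n with
  | zero => simp
  | succ m ih =>
    have hsplit : ((range (m+1)) ×ˢ (range (m+1))).filter (fun p => p.1 < p.2)
        = (((range m) ×ˢ (range m)).filter (fun p => p.1 < p.2)) ∪ ((range m).image (fun a => (a, m))) := by
      ext p
      simp only [mem_filter, mem_product, mem_range, mem_union, mem_image]
      constructor
      · rintro ⟨⟨h1, h2⟩, h3⟩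
        by_cases hm : p.2 = m
        · right; exact ⟨p.1, by omega, by rw [← hm]⟩
        · left; omega
      · rintro (⟨⟨h1, h2⟩, h3⟩ | ⟨a, ha, rfl⟩)
        · omega
        · simp only [Prod.fst, Prod.snd]
          omega
    rw [hsplit, card_union_of_disjoint, ih, card_image_of_injective _ (fun a b h => by simpa using h)]
    · rw [card_range, Nat.choose_succ_succ m 1, Nat.choose_one_right, Nat.add_comm]
    · rw [disjoint_left]
      rintro p hp hq
      simp only [mem_filter, mem_product, mem_range] at hp
      simp only [mem_image, mem_range] at hq
      obtain ⟨a, ha, rfl⟩ := hq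
      simp at hp

lemma card_TleN (n : ℕ) : (((range n) ×ˢ (range n)).filter (fun p => p.1 ≤ p.2)).card = (n+1).choose 2 := by
  induction n with
  | zero => simp
  | succ m ih =>
    have hsplit : ((range (m+1)) ×ˢ (range (m+1))).filter (fun p => p.1 ≤ p.2)
        = (((range m) ×ˢ (range m)).filter (fun p => p.1 ≤ p.2)) ∪ ((range (m+1)).image (fun a => (a, m))) := by
      ext p
      simp only [mem_filter, mem_product, mem_range, mem_union, mem_image]
      constructor
      · rintro ⟨⟨h1, h2⟩, h3⟩
        by_cases hm : p.2 = m
        · right; exact ⟨p.1, by omega, by rw [← hm]⟩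
        · left; omega
      · rintro (⟨⟨h1, h2⟩, h3⟩ | ⟨a, ha, rfl⟩)
        · omega
        · simp only [Prod.fst, Prod.snd]
          omega
    rw [hsplit, card_union_of_disjoint, ih, card_image_of_injective _ (fun a b h => by simpa using h)]
    · rw [card_range, Nat.choose_succ_succ (m+1) 1, Nat.choose_one_right, Nat.add_comm]
    · rw [disjoint_left]
      rintro p hp hq
      simp only [mem_filter, mem_product, mem_range] at hp
      simp only [mem_image, mem_range] at hq
      obtain ⟨a, ha, rfl⟩ := hq
      simp at hp

-- ℤ versions
lemma card_Tlt (l h : ℤ) :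
    (((Finset.Ico l h) ×ˢ (Finset.Ico l h)).filter (fun p => p.1 < p.2)).card = (h - l).toNat.choose 2 := by
  rw [← card_TltN]
  apply Finset.card_nbij' (i := fun p => ((p.1 - l).toNat, (p.2 - l).toNat))
    (j := fun q => (l + q.1, l + q.2))
  · intro p hp
    simp only [mem_coe, mem_filter, mem_product, mem_Ico] at hp
    simp only [mem_coe, mem_filter, mem_product, mem_range]
    omega
  · intro q hq
    simp only [mem_coe, mem_filter, mem_product, mem_range] at hq
    simp only [mem_coe, mem_filter, mem_product, mem_Ico]
    omega
  · intro p hp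
    simp only [mem_coe, mem_filter, mem_product, mem_Ico] at hp
    simp only [Prod.ext_iff]
    constructor <;> omega
  · intro q hq
    simp only [mem_coe, mem_filter, mem_product, mem_range] at hq
    simp only [Prod.ext_iff]
    constructor <;> omega

lemma card_Tle (l h : ℤ) :
    (((Finset.Ico l h) ×ˢ (Finset.Ico l h)).filter (fun p => p.1 ≤ p.2)).card = ((h - l).toNat + 1).choose 2 := by
  rw [← card_TleN]
  apply Finset.card_nbij' (i := fun p => ((p.1 - l).toNat, (p.2 - l).toNat))
    (j := fun q => (l + q.1, l + q.2))
  · intro p hp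
    simp only [mem_coe, mem_filter, mem_product, mem_Ico] at hp
    simp only [mem_coe, mem_filter, mem_product, mem_range]
    omega
  · intro q hq
    simp only [mem_coe, mem_filter, mem_product, mem_range] at hq
    simp only [mem_coe, mem_filter, mem_product, mem_Ico]
    omega
  · intro p hp
    simp only [mem_coe, mem_filter, mem_product, mem_Ico] at hp
    simp only [Prod.ext_iff]
    constructor <;> omega
  · intro q hq
    simp only [mem_coe, mem_filter, mem_product, mem_range] at hq
    simp only [Prod.ext_iff]
    constructor <;> omega

lemma two_mul_choose (n : ℕ) : 2 * n.choose 2 = n * (n - 1) := by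
  rw [Nat.choose_two_right]
  rcases n with _ | m
  · simp
  · have he : 2 ∣ (m + 1) * (m + 1 - 1) := by
      simp only [Nat.add_sub_cancel]
      rw [Nat.mul_comm]
      exact (Nat.even_mul_succ_self m).two_dvd
    exact Nat.mul_div_cancel' he

lemma arith_pair (m : ℤ) :
    ((((-m).toNat + 1).choose 2 : ℤ) + (m.toNat.choose 2 : ℤ)) = m * (m - 1) / 2 := by
  have key : 2 * ((((-m).toNat + 1).choose 2 : ℤ) + (m.toNat.choose 2 : ℤ)) = m * (m - 1) := by
    rcases le_or_gt 0 m with hm | hm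
    · have h0 : (-m).toNat = 0 := by omega
      have hn := two_mul_choose m.toNat
      have hcast : ((m.toNat * (m.toNat - 1) : ℕ) : ℤ) = m * (m - 1) := by
        rcases eq_or_lt_of_le hm with h | h
        · simp [← h]
        · push_cast [Nat.cast_sub (by omega : 1 ≤ m.toNat)]
          rw [Int.toNat_of_nonneg hm]
      rw [h0]
      calc 2 * (((1).choose 2 : ℤ) + (m.toNat.choose 2 : ℤ))
          = ((2 * m.toNat.choose 2 : ℕ) : ℤ) := by norm_num
        _ = ((m.toNat * (m.toNat - 1) : ℕ) : ℤ) := by rw [hn]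
        _ = m * (m - 1) := hcast
    · have h0 : m.toNat = 0 := by omega
      set n : ℕ := (-m).toNat with hndef
      have hn := two_mul_choose (n + 1)
      have hcast : (((n + 1) * (n + 1 - 1) : ℕ) : ℤ) = m * (m - 1) := by
        have h1 : ((n : ℤ)) = -m := by omega
        have : (m * (m - 1)) = (-m) * (-m + 1) := by ring
        rw [this, ← h1]
        push_cast
        ring
      rw [h0]
      calc 2 * (((n+1).choose 2 : ℤ) + ((0:ℕ).choose 2 : ℤ))
          = ((2 * (n+1).choose 2 : ℕ) : ℤ) := by norm_num
        _ = (((n + 1) * (n + 1 - 1) : ℕ) : ℤ) := by rw [hn]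
        _ = m * (m - 1) := hcast
  have heven : (2:ℤ) ∣ m * (m - 1) := (Int.even_mul_pred_self m).two_dvd
  obtain ⟨c, hc⟩ := heven
  rw [hc] at key ⊢
  rw [Int.mul_ediv_cancel_left _ (by norm_num)]
  omega



/-- target finset for runner `i`, residue `r`. -/
noncomputable def DD (d : ℕ → ℤ) (t r i : ℕ) : Finset (ℤ × ℤ) :=
  if i + r < t then
    ((Finset.Ico (d i) (d (i + r))) ×ˢ (Finset.Ico (d i) (d (i + r)))).filter (fun p => p.1 ≤ p.2)
  else
    ((Finset.Ico (d i) (d (i + r - t))) ×ˢ (Finset.Ico (d i) (d (i + r - t)))).filter (fun p => p.1 < p.2)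

lemma main_count (t : ℕ) (μ : YoungDiagram) (hμ : IsTCore t μ)
    (b d : ℕ → ℤ)
    (hb : ∀ i < t, IsLeast {j : ℤ | j % (t : ℤ) = (i : ℤ) ∧ ZOne μ j} (b i))
    (hd : ∀ i < t, b i = (t : ℤ) * d i + (i : ℤ))
    (r : ℕ) (hr1 : 1 ≤ r) (hr2 : r < t) :
    (μ.cells.filter (fun c => hookLen μ c.1 c.2 % t = r)).card
      = ∑ i ∈ range t, (DD d t r i).card := by
  have htZ : (0:ℤ) < t := by exact_mod_cast (by omega : 0 < t)
  have step : ∀ x : ℤ, ZOne μ x → ZOne μ (x + t) := by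
    intro x hx
    by_contra hny
    obtain ⟨rr, hrr⟩ := not_zone_iff.mp hny
    obtain ⟨j, hj⟩ := zone_iff_u.mp hx
    have hmem : (rr, j) ∈ μ := mem_iff_uv.mpr (by rw [hj, hrr]; omega)
    have hh := hook_eq hmem
    have hht : hookLen μ rr j = t := by
      have : (hookLen μ rr j : ℤ) = t := by rw [hh, hrr, hj]; ring
      exact_mod_cast this
    exact hμ (rr, j) ((YoungDiagram.mem_cells _).mpr hmem) (hht ▸ dvd_refl t)
  have up : ∀ x : ℤ, ZOne μ x → ∀ n : ℕ, ZOne μ (x + t * n) := by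
    intro x hx n
    induction n with
    | zero => simpa using hx
    | succ m ih =>
      have h2 := step _ ih
      have he : x + (t:ℤ) * ((m + 1 : ℕ) : ℤ) = (x + t * m) + t := by push_cast; ring
      rw [he]; exact h2
  have runner : ∀ i : ℕ, i < t → ∀ x : ℤ, x % t = i → (ZOne μ x ↔ b i ≤ x) := by
    intro i hi x hx
    obtain ⟨⟨hbmod, hbz⟩, hbmin⟩ := hb i hi
    constructor
    · intro hzx; exact hbmin ⟨hx, hzx⟩
    · intro hle
      have hmodeq : b i % (t:ℤ) = x % t := by rw [hx, hbmod]
      obtain ⟨c, hc⟩ := Int.ModEq.dvd hmodeq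
      have hc0 : 0 ≤ c := by
        by_contra hneg
        have : (t:ℤ) * c < 0 := mul_neg_of_pos_of_neg htZ (by omega)
        omega
      have hx2 : x = b i + t * (c.toNat : ℤ) := by rw [Int.toNat_of_nonneg hc0]; omega
      rw [hx2]; exact up (b i) hbz c.toNat
  have hdec1 : ∀ (a : ℤ) (i : ℕ), i < t → ((t:ℤ) * a + i) % t = (i:ℤ) := by
    intro a i hi
    rw [add_comm, Int.add_mul_emod_self_left,
      Int.emod_eq_of_lt (by positivity) (by exact_mod_cast hi)]
  have hdec2 : ∀ (a : ℤ) (i : ℕ), i < t → ((t:ℤ) * a + i) / t = a := by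
    intro a i hi
    rw [add_comm, Int.add_mul_ediv_left _ _ (by omega : (t:ℤ) ≠ 0),
      Int.ediv_eq_zero_of_lt (by positivity) (by exact_mod_cast hi), zero_add]
  have oneChar : ∀ (a : ℤ) (i : ℕ), i < t → (ZOne μ ((t:ℤ) * a + i) ↔ d i ≤ a) := by
    intro a i hi
    rw [runner i hi _ (hdec1 a i hi), hd i hi]
    constructor
    · intro h
      have h2 : (t:ℤ) * d i ≤ t * a := by omega
      exact le_of_mul_le_mul_left h2 htZ
    · intro h
      have h2 : (t:ℤ) * d i ≤ t * a := mul_le_mul_of_nonneg_left h (le_of_lt htZ)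
      omega
  have zeroChar : ∀ (a : ℤ) (i : ℕ), i < t → (¬ ZOne μ ((t:ℤ) * a + i) ↔ a < d i) := by
    intro a i hi
    rw [oneChar a i hi]; omega
  -- residue fact for cells in the filter
  have resFact : ∀ r1 j1 : ℕ, (r1, j1) ∈ μ → hookLen μ r1 j1 % t = r →
      (vP μ r1) % t = ((uP μ j1) % t + r) % t := by
    intro r1 j1 hmem hres
    have hhook := hook_eq hmem
    have hyx : (vP μ r1 - uP μ j1) % t = (r:ℤ) % t := by
      rw [← hhook, ← Int.natCast_mod, hres]
      exact (Int.emod_eq_of_lt (by positivity) (by exact_mod_cast hr2)).symm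
    conv_lhs => rw [show vP μ r1 = (vP μ r1 - uP μ j1) + uP μ j1 by ring]
    rw [Int.add_emod, hyx, ← Int.emod_add_emod, Int.emod_emod_of_dvd _ (dvd_refl _)]
    rw [Int.emod_add_emod, Int.add_comm, Int.emod_add_emod]
  -- the bijection
  rw [← Finset.card_sigma]
  refine Finset.card_bij
    (fun c _ => ⟨((uP μ c.2) % t).toNat, ((uP μ c.2) / t, (vP μ c.1) / t)⟩) ?_ ?_ ?_
  · -- maps into target
    rintro ⟨r1, j1⟩ hc
    simp only [Finset.mem_sigma, Finset.mem_range]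
    simp only [Finset.mem_filter, YoungDiagram.mem_cells] at hc
    obtain ⟨hmem, hres⟩ := hc
    have hmem' := mem_iff_uv.mp hmem
    have hxz : ZOne μ (uP μ j1) := zone_iff_u.mpr ⟨j1, rfl⟩
    set x := uP μ j1 with hxd
    set y := vP μ r1 with hyd
    have hxm : 0 ≤ x % t := Int.emod_nonneg x (by omega)
    have hxlt : x % t < t := Int.emod_lt_of_pos x htZ
    have hym : 0 ≤ y % t := Int.emod_nonneg y (by omega)
    have hylt : y % t < t := Int.emod_lt_of_pos y htZ
    set i : ℕ := ((x % t).toNat) with hid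
    have hiv : (i:ℤ) = x % t := Int.toNat_of_nonneg hxm
    have hilt : i < t := by omega
    have hxsplit : x = (t:ℤ) * (x / t) + i := by
      have := Int.mul_ediv_add_emod x t
      rw [hiv]; omega
    have hda : d i ≤ x / t := (oneChar (x/t) i hilt).mp (by rw [← hxsplit]; exact hxz)
    have hyres : y % t = ((i:ℤ) + r) % t := by
      rw [resFact r1 j1 hmem hres, hiv]
    refine ⟨hilt, ?_⟩
    by_cases hcase : i + r < t
    · have hymod : y % t = ((i + r : ℕ) : ℤ) := by
        rw [hyres, Int.emod_eq_of_lt (by positivity) (by exact_mod_cast hcase)]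
        push_cast; ring
      have hysplit : y = (t:ℤ) * (y / t) + ((i + r : ℕ) : ℤ) := by
        have := Int.mul_ediv_add_emod y t
        rw [← hymod]; omega
      have hdb : y / t < d (i + r) :=
        (zeroChar (y/t) (i+r) hcase).mp (by rw [← hysplit]; exact not_zone_iff.mpr ⟨r1, rfl⟩)
      have hab : x / t ≤ y / t := by
        by_contra hab
        push_neg at hab
        have h1 : y / t - x / t ≤ -1 := by omega
        have h2 : (t:ℤ) * (y/t - x/t) ≤ t * (-1) := mul_le_mul_of_nonneg_left h1 (le_of_lt htZ)
        have h3 : y - x = (t:ℤ) * (y/t - x/t) + r := by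
          push_cast at hysplit
          rw [mul_sub] at h2 ⊢
          omega
        omega
      simp only [DD, if_pos hcase, Finset.mem_filter, Finset.mem_product, Finset.mem_Ico]
      refine ⟨⟨⟨hda, by omega⟩, ⟨by omega, hdb⟩⟩, hab⟩
    · push_neg at hcase
      have hilt2 : i + r - t < t := by omega
      have hymod : y % t = ((i + r - t : ℕ) : ℤ) := by
        rw [hyres]
        have h1 : (i:ℤ) + r = ((i + r - t : ℕ) : ℤ) + t * 1 := by push_cast; omega
        rw [h1, Int.add_mul_emod_self_left,
          Int.emod_eq_of_lt (by positivity) (by exact_mod_cast hilt2)]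
      have hysplit : y = (t:ℤ) * (y / t) + ((i + r - t : ℕ) : ℤ) := by
        have := Int.mul_ediv_add_emod y t
        rw [← hymod]; omega
      have hdb : y / t < d (i + r - t) :=
        (zeroChar (y/t) (i+r-t) hilt2).mp (by rw [← hysplit]; exact not_zone_iff.mpr ⟨r1, rfl⟩)
      have hab : x / t < y / t := by
        by_contra hab
        push_neg at hab
        have h1 : y / t - x / t ≤ 0 := by omega
        have h2 : (t:ℤ) * (y/t - x/t) ≤ t * 0 := mul_le_mul_of_nonneg_left h1 (le_of_lt htZ)
        have h3 : y - x = (t:ℤ) * (y/t - x/t) + ((i + r - t : ℕ) : ℤ) - i := by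
          rw [mul_sub]
          omega
        have h4 : ((i + r - t : ℕ) : ℤ) - i = (r:ℤ) - t := by push_cast; omega
        omega
      simp only [DD, if_neg (by omega : ¬ i + r < t), Finset.mem_filter, Finset.mem_product,
        Finset.mem_Ico]
      refine ⟨⟨⟨hda, by omega⟩, ⟨by omega, hdb⟩⟩, hab⟩
  · -- injectivity
    rintro ⟨r1, j1⟩ h1 ⟨r2, j2⟩ h2 heq
    simp only [Finset.mem_filter, YoungDiagram.mem_cells] at h1 h2
    obtain ⟨hi, heq2⟩ := Sigma.mk.inj_iff.mp heq
    obtain ⟨ha, hbb⟩ := Prod.ext_iff.mp (eq_of_heq heq2)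
    dsimp only at hi ha hbb
    have hx : uP μ j1 = uP μ j2 := by
      have e1 : uP μ j1 = (t:ℤ) * (uP μ j1 / t) + ((uP μ j1 % t).toNat : ℤ) := by
        have := Int.mul_ediv_add_emod (uP μ j1) t
        rw [Int.toNat_of_nonneg (Int.emod_nonneg _ (by omega))]; omega
      have e2 : uP μ j2 = (t:ℤ) * (uP μ j2 / t) + ((uP μ j2 % t).toNat : ℤ) := by
        have := Int.mul_ediv_add_emod (uP μ j2) t
        rw [Int.toNat_of_nonneg (Int.emod_nonneg _ (by omega))]; omega
      rw [e1, e2, hi, ha]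
    have hres1 := resFact r1 j1 h1.1 h1.2
    have hres2 := resFact r2 j2 h2.1 h2.2
    have hymod : vP μ r1 % t = vP μ r2 % t := by rw [hres1, hres2, hx]
    have hy : vP μ r1 = vP μ r2 := by
      have e1 := Int.mul_ediv_add_emod (vP μ r1) t
      have e2 := Int.mul_ediv_add_emod (vP μ r2) t
      rw [hbb] at e1
      omega
    have hj : j1 = j2 := (u_strictMono μ).injective hx
    have hr : r1 = r2 := (v_strictAnti μ).injective hy
    simp [hj, hr]
  · -- surjectivity
    rintro ⟨i, a, bb⟩ hmem
    simp only [Finset.mem_sigma, Finset.mem_range] at hmem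
    obtain ⟨hit, hD⟩ := hmem
    by_cases hcase : i + r < t
    · simp only [DD, if_pos hcase, Finset.mem_filter, Finset.mem_product, Finset.mem_Ico] at hD
      obtain ⟨⟨⟨hda, _⟩, ⟨_, hdb⟩⟩, hab⟩ := hD
      set x : ℤ := (t:ℤ) * a + i with hxd
      set y : ℤ := (t:ℤ) * bb + ((i + r : ℕ) : ℤ) with hyd
      have hxz : ZOne μ x := (oneChar a i hit).mpr hda
      have hyz : ¬ ZOne μ y := (zeroChar bb (i+r) hcase).mpr hdb
      have hxy : x < y := by
        have h2 : (t:ℤ) * a ≤ t * bb := mul_le_mul_of_nonneg_left hab (le_of_lt htZ)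
        have : ((i + r : ℕ):ℤ) = (i:ℤ) + r := by push_cast; ring
        omega
      obtain ⟨j, hj⟩ := zone_iff_u.mp hxz
      obtain ⟨rr, hrr⟩ := not_zone_iff.mp hyz
      have hmem2 : (rr, j) ∈ μ := mem_iff_uv.mpr (by rw [hj, hrr]; omega)
      have hhook := hook_eq hmem2
      have hresZ : (hookLen μ rr j : ℤ) % t = (r:ℤ) := by
        rw [hhook, hrr, hj]
        have h5 : y - x = (t:ℤ) * (bb - a) + (r:ℤ) := by
          rw [hxd, hyd]; push_cast; ring
        rw [h5, hdec1 (bb - a) r hr2]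
      have hres : hookLen μ rr j % t = r := by
        have := hresZ
        rw [← Int.natCast_mod] at this
        exact_mod_cast this
      refine ⟨(rr, j), Finset.mem_filter.mpr ⟨(YoungDiagram.mem_cells _).mpr hmem2, hres⟩, ?_⟩
      have hxm : uP μ j % t = (i:ℤ) := by rw [hj]; exact hdec1 a i hit
      have hxdiv : uP μ j / t = a := by rw [hj]; exact hdec2 a i hit
      have hydiv : vP μ rr / t = bb := by rw [hrr]; exact hdec2 bb (i+r) hcase
      have h6 : (uP μ j % t).toNat = i := by rw [hxm]; omega
      dsimp only
      rw [h6, hxdiv, hydiv]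
    · simp only [DD, if_neg hcase, Finset.mem_filter, Finset.mem_product, Finset.mem_Ico] at hD
      obtain ⟨⟨⟨hda, _⟩, ⟨_, hdb⟩⟩, hab⟩ := hD
      push_neg at hcase
      have hilt2 : i + r - t < t := by omega
      set x : ℤ := (t:ℤ) * a + i with hxd
      set y : ℤ := (t:ℤ) * bb + ((i + r - t : ℕ) : ℤ) with hyd
      have hxz : ZOne μ x := (oneChar a i hit).mpr hda
      have hyz : ¬ ZOne μ y := (zeroChar bb (i+r-t) hilt2).mpr hdb
      have hxy : x < y := by
        have h1 : a + 1 ≤ bb := by omega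
        have h2 : (t:ℤ) * (a + 1) ≤ t * bb := mul_le_mul_of_nonneg_left (by omega) (le_of_lt htZ)
        have h3 : ((i + r - t : ℕ):ℤ) = (i:ℤ) + r - t := by push_cast; omega
        rw [mul_add] at h2
        omega
      obtain ⟨j, hj⟩ := zone_iff_u.mp hxz
      obtain ⟨rr, hrr⟩ := not_zone_iff.mp hyz
      have hmem2 : (rr, j) ∈ μ := mem_iff_uv.mpr (by rw [hj, hrr]; omega)
      have hhook := hook_eq hmem2
      have hresZ : (hookLen μ rr j : ℤ) % t = (r:ℤ) := by
        rw [hhook, hrr, hj]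
        have hc5 : ((i + r - t : ℕ) : ℤ) = (i:ℤ) + r - t := by omega
        have h5 : y - x = (t:ℤ) * (bb - a - 1) + (r:ℤ) := by
          rw [hxd, hyd, hc5]; ring
        rw [h5, hdec1 (bb - a - 1) r hr2]
      have hres : hookLen μ rr j % t = r := by
        have := hresZ
        rw [← Int.natCast_mod] at this
        exact_mod_cast this
      refine ⟨(rr, j), Finset.mem_filter.mpr ⟨(YoungDiagram.mem_cells _).mpr hmem2, hres⟩, ?_⟩
      have hxm : uP μ j % t = (i:ℤ) := by rw [hj]; exact hdec1 a i hit
      have hxdiv : uP μ j / t = a := by rw [hj]; exact hdec2 a i hit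
      have hydiv : vP μ rr / t = bb := by rw [hrr]; exact hdec2 bb (i+r-t) hilt2
      have h6 : (uP μ j % t).toNat = i := by rw [hxm]; omega
      dsimp only
      rw [h6, hxdiv, hydiv]


end StmtAux

open StmtAux

theorem stmt14 (t : ℕ) (ht : 1 ≤ t) (μ : YoungDiagram) (hμ : IsTCore t μ)
    (b d : ℕ → ℤ)
    (hb : ∀ i < t, IsLeast {j : ℤ | j % (t : ℤ) = (i : ℤ) ∧ ZOne μ j} (b i))
    (hd : ∀ i < t, b i = (t : ℤ) * d i + (i : ℤ))
    (k : ℕ) (hk1 : 1 ≤ k) (hk2 : k ≤ t - 1) :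
    (((μ.cells.filter (fun c => hookLen μ c.1 c.2 % t = k)).card : ℤ)
      + ((μ.cells.filter (fun c => hookLen μ c.1 c.2 % t = (t - k) % t)).card : ℤ))
      = (∑ i ∈ range (t - k), (d i - d (i + k)) * (d i - d (i + k) - 1) / 2)
        + ∑ i ∈ range k, (d i - d (i + t - k)) * (d i - d (i + t - k) - 1) / 2 := by
  have ht2 : 2 ≤ t := by omega
  have hkt : k < t := by omega
  have htk1 : 1 ≤ t - k := by omega
  have htklt : t - k < t := by omega
  rw [Nat.mod_eq_of_lt htklt]
  rw [main_count t μ hμ b d hb hd k hk1 hkt,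
      main_count t μ hμ b d hb hd (t-k) htk1 htklt]
  push_cast
  have hA := Finset.sum_range_add (fun i => ((DD d t k i).card : ℤ)) (t-k) k
  rw [show (t-k) + k = t by omega] at hA
  have hB := Finset.sum_range_add (fun i => ((DD d t (t-k) i).card : ℤ)) k (t-k)
  rw [show k + (t-k) = t by omega] at hB
  have claim1 : ∀ i ∈ range (t-k),
      ((DD d t k i).card : ℤ) + ((DD d t (t-k) (k + i)).card : ℤ)
        = (d i - d (i+k)) * (d i - d (i+k) - 1) / 2 := by
    intro i hi
    rw [Finset.mem_range] at hi
    have c1 : (DD d t k i).card = ((d (i+k) - d i).toNat + 1).choose 2 := by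
      simp only [DD]; rw [if_pos (show i + k < t by omega), card_Tle]
    have c2 : (DD d t (t-k) (k+i)).card = (d i - d (k+i)).toNat.choose 2 := by
      simp only [DD]
      rw [if_neg (show ¬ (k + i + (t-k) < t) by omega)]
      have e : k + i + (t - k) - t = i := by omega
      rw [e, card_Tlt]
    rw [c1, c2, show k + i = i + k from Nat.add_comm k i]
    have h := arith_pair (d i - d (i+k))
    rw [show -(d i - d (i+k)) = d (i+k) - d i by ring] at h
    exact h
  have claim2 : ∀ i ∈ range k,
      ((DD d t (t-k) i).card : ℤ) + ((DD d t k ((t-k) + i)).card : ℤ)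
        = (d i - d (i+t-k)) * (d i - d (i+t-k) - 1) / 2 := by
    intro i hi
    rw [Finset.mem_range] at hi
    have c1 : (DD d t (t-k) i).card = ((d (i + (t-k)) - d i).toNat + 1).choose 2 := by
      simp only [DD]; rw [if_pos (show i + (t-k) < t by omega), card_Tle]
    have c2 : (DD d t k ((t-k)+i)).card = (d i - d ((t-k)+i)).toNat.choose 2 := by
      simp only [DD]
      rw [if_neg (show ¬ ((t-k) + i + k < t) by omega)]
      have e : (t-k) + i + k - t = i := by omega
      rw [e, card_Tlt]
    have eidx : (t-k) + i = i + t - k := by omega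
    have eidx2 : i + (t-k) = i + t - k := by omega
    rw [c1, c2, eidx, eidx2]
    have h := arith_pair (d i - d (i + t - k))
    rw [show -(d i - d (i + t - k)) = d (i + t - k) - d i by ring] at h
    exact h
  have E1 : (∑ i ∈ range (t-k), ((DD d t k i).card : ℤ))
      + (∑ i ∈ range (t-k), ((DD d t (t-k) (k+i)).card : ℤ))
      = ∑ i ∈ range (t-k), (d i - d (i+k)) * (d i - d (i+k) - 1) / 2 := by
    rw [← Finset.sum_add_distrib]; exact Finset.sum_congr rfl claim1
  have E2 : (∑ i ∈ range k, ((DD d t (t-k) i).card : ℤ))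
      + (∑ i ∈ range k, ((DD d t k ((t-k)+i)).card : ℤ))
      = ∑ i ∈ range k, (d i - d (i+t-k)) * (d i - d (i+t-k) - 1) / 2 := by
    rw [← Finset.sum_add_distrib]; exact Finset.sum_congr rfl claim2
  omega
end

section
/- Let t be a positive integer, μ a t-core partition, and λ a partition with t-core equal to μ and |λ| = |μ| + nt. Then for every 0 ≤ k ≤ t−1, (#{□ ∈ λ : h_□ ≡ k mod t} + #{□ ∈ λ : h_□ ≡ −k mod t}) − (#{□ ∈ μ : h_□ ≡ k mod t} + #{□ ∈ μ : h_□ ≡ −k mod t}) = 2n. -/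
open Finset

open PaperDefs


namespace Stmt15Aux

attribute [local instance] Classical.propDecidable

def zpos (μ : YoungDiagram) (r : ℕ) : ℤ := (μ.rowLen r : ℤ) - (r + 1)
def opos (μ : YoungDiagram) (j : ℕ) : ℤ := (j : ℤ) - μ.colLen j

lemma not_zone_iff {μ : YoungDiagram} {a : ℤ} : ¬ ZOne μ a ↔ ∃ r, a = zpos μ r := by
  unfold ZOne zpos; push_neg; rfl

lemma opos_ne_zpos (μ : YoungDiagram) (j r : ℕ) : opos μ j ≠ zpos μ r := by
  unfold opos zpos
  by_cases h : (r, j) ∈ μ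
  · have h1 : j < μ.rowLen r := YoungDiagram.mem_iff_lt_rowLen.mp h
    have h2 : r < μ.colLen j := YoungDiagram.mem_iff_lt_colLen.mp h
    omega
  · have h1 : ¬ j < μ.rowLen r := fun hh => h (YoungDiagram.mem_iff_lt_rowLen.mpr hh)
    have h2 : ¬ r < μ.colLen j := fun hh => h (YoungDiagram.mem_iff_lt_colLen.mpr hh)
    omega

lemma rowLen_eq_zero_of_ge {μ : YoungDiagram} {r : ℕ} (h : μ.colLen 0 ≤ r) : μ.rowLen r = 0 := by
  by_contra h0
  have h1 : (r, 0) ∈ μ := YoungDiagram.mem_iff_lt_rowLen.mpr (Nat.pos_of_ne_zero h0)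
  have h2 := YoungDiagram.mem_iff_lt_colLen.mp h1
  omega

lemma exists_opos {μ : YoungDiagram} {a : ℤ} (ha : ZOne μ a) : ∃ j, a = opos μ j := by
  have hge : -(μ.colLen 0 : ℤ) ≤ a := by
    by_contra hlt
    push_neg at hlt
    set s : ℕ := (-a - 1).toNat with hs
    have hsz : (s : ℤ) = -a - 1 := Int.toNat_of_nonneg (by omega)
    have hcs : μ.colLen 0 ≤ s := by omega
    have h2 := ha s
    rw [rowLen_eq_zero_of_ge hcs] at h2
    omega
  by_contra hno
  push_neg at hno
  set P : ℕ → Prop := fun j => opos μ j ≤ a with hP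
  set b : ℕ := (a + μ.colLen 0).toNat with hb
  have hP0 : P 0 := by simp only [hP, opos]; push_cast; omega
  have hjb : Nat.findGreatest P b ≤ b := Nat.findGreatest_le b
  set j := Nat.findGreatest P b with hj
  have hPj : P j := Nat.findGreatest_spec (Nat.zero_le b) hP0
  have hbz : a + (μ.colLen 0 : ℤ) ≤ (b : ℤ) := by rw [hb]; exact Int.self_le_toNat _
  have hnext : a < opos μ (j+1) := by
    by_cases hc : j + 1 ≤ b
    · have h3 : ¬ P (j + 1) := Nat.findGreatest_is_greatest (Nat.lt_succ_self j) hc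
      simp only [hP, not_le] at h3
      exact h3
    · have h1 : (μ.colLen (j+1) : ℤ) ≤ (μ.colLen 0 : ℤ) := by
        exact_mod_cast μ.colLen_anti 0 (j+1) (Nat.zero_le _)
      have hjb' : j = b := by omega
      unfold opos; omega
  have hlt' : opos μ j < a := lt_of_le_of_ne hPj (fun h => hno j h.symm)
  -- construct the zero position r with zpos μ r = a
  have haj : a ≤ (j : ℤ) := by
    have h1 : (0:ℤ) ≤ (μ.colLen (j+1) : ℤ) := by positivity
    unfold opos at hnext; push_cast at hnext; omega
  set r : ℕ := ((j : ℤ) - a).toNat with hr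
  have hrz : (r : ℤ) = (j : ℤ) - a := Int.toNat_of_nonneg (by omega)
  have hcol1 : r < μ.colLen j := by
    unfold opos at hlt'; omega
  have hcol2 : μ.colLen (j+1) ≤ r := by
    unfold opos at hnext; push_cast at hnext; omega
  have hm1 : (r, j) ∈ μ := YoungDiagram.mem_iff_lt_colLen.mpr hcol1
  have hm2 : (r, j+1) ∉ μ := fun hh => by
    have := YoungDiagram.mem_iff_lt_colLen.mp hh; omega
  have hrow : μ.rowLen r = j + 1 := by
    have h1 : j < μ.rowLen r := YoungDiagram.mem_iff_lt_rowLen.mp hm1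
    have h2 : ¬ (j+1) < μ.rowLen r := fun hh => hm2 (YoungDiagram.mem_iff_lt_rowLen.mpr hh)
    omega
  have := ha r
  rw [hrow] at this
  omega

lemma zone_iff {μ : YoungDiagram} {a : ℤ} : ZOne μ a ↔ ∃ j, a = opos μ j := by
  constructor
  · exact exists_opos
  · rintro ⟨j, rfl⟩ r
    exact opos_ne_zpos μ j r

lemma opos_strictMono (μ : YoungDiagram) : StrictMono (opos μ) := by
  apply strictMono_nat_of_lt_succ
  intro j
  have h := μ.colLen_anti j (j+1) (by omega)
  unfold opos; push_cast; omega

lemma zpos_strictAnti (μ : YoungDiagram) : StrictAnti (zpos μ) := by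
  apply strictAnti_nat_of_succ_lt
  intro r
  have h := μ.rowLen_anti r (r+1) (by omega)
  unfold zpos; push_cast; omega

lemma opos_lt_zpos_iff {μ : YoungDiagram} {i j : ℕ} : opos μ j < zpos μ i ↔ (i, j) ∈ μ := by
  constructor
  · intro h
    by_contra hm
    have h1 : ¬ j < μ.rowLen i := fun hh => hm (YoungDiagram.mem_iff_lt_rowLen.mpr hh)
    have h2 : ¬ i < μ.colLen j := fun hh => hm (YoungDiagram.mem_iff_lt_colLen.mpr hh)
    unfold opos zpos at h; omega
  · intro hm
    have h1 : j < μ.rowLen i := YoungDiagram.mem_iff_lt_rowLen.mp hm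
    have h2 : i < μ.colLen j := YoungDiagram.mem_iff_lt_colLen.mp hm
    unfold opos zpos; omega

lemma hook_eq {μ : YoungDiagram} {i j : ℕ} (hm : (i, j) ∈ μ) :
    (hookLen μ i j : ℤ) = zpos μ i - opos μ j := by
  have h1 : j < μ.rowLen i := YoungDiagram.mem_iff_lt_rowLen.mp hm
  have h2 : i < μ.colLen j := YoungDiagram.mem_iff_lt_colLen.mp hm
  unfold hookLen zpos opos; omega


noncomputable def Fz (μ : YoungDiagram) (a : ℤ) : ℤ := if ZOne μ a then 1 else 0

noncomputable def Ez (t : ℕ) (r : ℤ) (a b : ℤ) : ℤ :=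
  if a < b ∧ (b - a) % (t : ℤ) = r then 1 else 0

noncomputable def Cnt (t : ℕ) (r : ℤ) (μ : YoungDiagram) (lo hi : ℤ) : ℤ :=
  ∑ a ∈ Finset.Icc lo hi, ∑ b ∈ Finset.Icc lo hi, Fz μ a * (1 - Fz μ b) * Ez t r a b

noncomputable def Ak (t : ℕ) (μ : YoungDiagram) (k : ℕ) : ℤ :=
  ((μ.cells.filter (fun c => hookLen μ c.1 c.2 % t = k)).card : ℤ)

lemma cnt_eq_card {t : ℕ} (k : ℕ) {μ : YoungDiagram} {lo hi : ℤ}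
    (hlo : lo ≤ -(μ.colLen 0 : ℤ)) (hhi : (μ.rowLen 0 : ℤ) - 1 ≤ hi) :
    Cnt t (k : ℤ) μ lo hi = Ak t μ k := by
  classical
  set W := Finset.Icc lo hi with hW
  have hpt : ∀ a b : ℤ, Fz μ a * (1 - Fz μ b) * Ez t (k : ℤ) a b
      = if (ZOne μ a ∧ ¬ ZOne μ b ∧ a < b ∧ (b - a) % (t : ℤ) = (k : ℤ)) then 1 else 0 := by
    intro a b
    unfold Fz Ez
    split_ifs <;> simp_all
  have h1 : Cnt t (k : ℤ) μ lo hi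
      = ∑ p ∈ W ×ˢ W, (if (ZOne μ p.1 ∧ ¬ ZOne μ p.2 ∧ p.1 < p.2 ∧ (p.2 - p.1) % (t : ℤ) = (k : ℤ)) then (1:ℤ) else 0) := by
    rw [Finset.sum_product]
    unfold Cnt
    exact Finset.sum_congr rfl fun a _ => Finset.sum_congr rfl fun b _ => hpt a b
  rw [h1, Finset.sum_boole]
  unfold Ak
  congr 1
  apply Eq.symm
  apply Finset.card_bij
    (i := fun (c : ℕ × ℕ) (_ : c ∈ μ.cells.filter (fun c => hookLen μ c.1 c.2 % t = k)) =>
      (opos μ c.2, zpos μ c.1))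
  · rintro ⟨i, j⟩ hc
    rw [Finset.mem_filter] at hc
    obtain ⟨hcell, hres⟩ := hc
    rw [YoungDiagram.mem_cells] at hcell
    have hlt : opos μ j < zpos μ i := opos_lt_zpos_iff.mpr hcell
    have hol : lo ≤ opos μ j := by
      have h2 : (μ.colLen j : ℤ) ≤ (μ.colLen 0 : ℤ) := by
        exact_mod_cast μ.colLen_anti 0 j (Nat.zero_le _)
      unfold opos; omega
    have hzh : zpos μ i ≤ hi := by
      have h2 : (μ.rowLen i : ℤ) ≤ (μ.rowLen 0 : ℤ) := by
        exact_mod_cast μ.rowLen_anti 0 i (Nat.zero_le _)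
      unfold zpos; omega
    rw [Finset.mem_filter, Finset.mem_product, Finset.mem_Icc, Finset.mem_Icc]
    dsimp only
    refine ⟨⟨⟨hol, by omega⟩, ⟨by omega, hzh⟩⟩, ?_, ?_, hlt, ?_⟩
    · exact zone_iff.mpr ⟨j, rfl⟩
    · exact not_zone_iff.mpr ⟨i, rfl⟩
    · have hmod : ((hookLen μ i j % t : ℕ) : ℤ) = ((hookLen μ i j : ℕ) : ℤ) % (t : ℤ) := by
        norm_cast
      rw [show zpos μ i - opos μ j = (hookLen μ i j : ℤ) from (hook_eq hcell).symm]
      rw [← hmod, hres]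
  · rintro ⟨i1, j1⟩ h1 ⟨i2, j2⟩ h2 heq
    simp only [Prod.mk.injEq] at heq
    obtain ⟨ho, hz⟩ := heq
    have hj : j1 = j2 := (opos_strictMono μ).injective ho
    have hi : i1 = i2 := (zpos_strictAnti μ).injective hz
    simp [hi, hj]
  · rintro ⟨a, b⟩ hp
    rw [Finset.mem_filter] at hp
    obtain ⟨hmem, h1, h2, h3, h4⟩ := hp
    obtain ⟨j, rfl⟩ := zone_iff.mp h1
    obtain ⟨i, rfl⟩ := not_zone_iff.mp h2
    have hcell : (i, j) ∈ μ := opos_lt_zpos_iff.mp h3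
    refine ⟨(i, j), ?_, rfl⟩
    rw [Finset.mem_filter, YoungDiagram.mem_cells]
    refine ⟨hcell, ?_⟩
    have he := hook_eq hcell
    rw [← he] at h4
    have h5 : ((hookLen μ i j % t : ℕ) : ℤ) = (k : ℤ) := by
      push_cast
      omega
    exact_mod_cast h5
lemma emod_shift (t : ℕ) (x : ℤ) : (x + (t:ℤ)) % (t:ℤ) = x % (t:ℤ) := by
  simpa using Int.add_mul_emod_self_left (a := x) (b := (t:ℤ)) (c := 1)

lemma fz_one {μ : YoungDiagram} {a : ℤ} (h : ZOne μ a) : Fz μ a = 1 := if_pos h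
lemma fz_zero {μ : YoungDiagram} {a : ℤ} (h : ¬ ZOne μ a) : Fz μ a = 0 := if_neg h

lemma fz_step {t : ℕ} (ht : 1 ≤ t) {μ ν : YoungDiagram} {u : ℤ}
    (hu : ¬ ZOne μ u) (hv : ZOne μ (u + (t:ℤ)))
    (hiff : ∀ j : ℤ, ZOne ν j ↔ (j = u ∨ (j ≠ u + (t : ℤ) ∧ ZOne μ j))) (a : ℤ) :
    Fz ν a = Fz μ a + ((if a = u then (1:ℤ) else 0) - (if a = u + (t:ℤ) then 1 else 0)) := by
  have htu : u ≠ u + (t:ℤ) := by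
    have : (1:ℤ) ≤ (t:ℤ) := by exact_mod_cast ht
    omega
  by_cases ha : a = u
  · subst ha
    have h1 : ZOne ν a := (hiff a).mpr (Or.inl rfl)
    rw [fz_one h1, fz_zero hu, if_pos rfl, if_neg htu]; ring
  · by_cases hb : a = u + (t:ℤ)
    · subst hb
      have h2 : ¬ ZOne ν (u + (t:ℤ)) := fun hh => by
        rcases (hiff _).mp hh with h | h
        · exact htu h.symm
        · exact h.1 rfl
      rw [fz_zero h2, fz_one hv, if_neg ha, if_pos rfl]; ring
    · have h3 : ZOne ν a ↔ ZOne μ a := by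
        rw [hiff a]; simp [ha, hb]
      unfold Fz
      rw [if_congr h3 rfl rfl, if_neg ha, if_neg hb]; ring

lemma sum_delta_mul {W : Finset ℤ} {u v : ℤ} (hu : u ∈ W) (hv : v ∈ W) (g : ℤ → ℤ) :
    ∑ a ∈ W, ((if a = u then (1:ℤ) else 0) - (if a = v then 1 else 0)) * g a = g u - g v := by
  simp [sub_mul, Finset.sum_sub_distrib, ite_mul, Finset.sum_ite_eq', hu, hv]

-- pointwise lemmas, case 0 < r < t
lemma ptA {t r : ℕ} (hr0 : 0 < r) (hrt : r < t) (μ : YoungDiagram) (u a : ℤ) :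
    Fz μ a * (Ez t (r:ℤ) a (u + (t:ℤ)) - Ez t (r:ℤ) a u)
      = if a = u + (t:ℤ) - (r:ℤ) then Fz μ a else 0 := by
  set v := u + (t:ℤ) with hvdef
  have ht1 : (1:ℤ) ≤ (t:ℤ) := by exact_mod_cast Nat.one_le_of_lt hrt
  have hr1 : (1:ℤ) ≤ (r:ℤ) := by exact_mod_cast hr0
  have hrt' : (r:ℤ) < (t:ℤ) := by exact_mod_cast hrt
  by_cases hav : a = v - (r:ℤ)
  · rw [if_pos hav]
    have e1 : Ez t (r:ℤ) a v = 1 := by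
      apply if_pos
      constructor
      · omega
      · rw [show v - a = (r:ℤ) by omega]
        exact Int.emod_eq_of_lt (by omega) (by omega)
    have e2 : Ez t (r:ℤ) a u = 0 := by
      apply if_neg
      rintro ⟨h1, -⟩; omega
    rw [e1, e2]; ring
  · rw [if_neg hav]
    rcases lt_trichotomy a u with h1 | h1 | h1
    · -- a < u : residues agree
      have e : Ez t (r:ℤ) a v = Ez t (r:ℤ) a u := by
        unfold Ez
        rw [show v - a = (u - a) + (t:ℤ) by omega, emod_shift]
        have : (a < v ∧ (u - a) % (t:ℤ) = (r:ℤ)) ↔ (a < u ∧ (u - a) % (t:ℤ) = (r:ℤ)) := by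
          constructor <;> rintro ⟨-, h2⟩ <;> exact ⟨by omega, h2⟩
        rw [if_congr this rfl rfl]
      rw [e]; ring
    · -- a = u
      rw [h1]
      have e1 : Ez t (r:ℤ) u v = 0 := by
        apply if_neg
        rintro ⟨-, h2⟩
        rw [show v - u = (t:ℤ) by omega, Int.emod_self] at h2
        omega
      have e2 : Ez t (r:ℤ) u u = 0 := by
        apply if_neg; rintro ⟨h2, -⟩; omega
      rw [e1, e2]; ring
    · rcases lt_trichotomy a v with h2 | h2 | h2
      · -- u < a < v
        have e1 : Ez t (r:ℤ) a v = 0 := by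
          apply if_neg
          rintro ⟨-, h3⟩
          rw [Int.emod_eq_of_lt (by omega) (by omega)] at h3
          omega
        have e2 : Ez t (r:ℤ) a u = 0 := by
          apply if_neg; rintro ⟨h3, -⟩; omega
        rw [e1, e2]; ring
      · rw [h2]
        have e1 : Ez t (r:ℤ) v v = 0 := by
          apply if_neg; rintro ⟨h3, -⟩; omega
        have e2 : Ez t (r:ℤ) v u = 0 := by
          apply if_neg; rintro ⟨h3, -⟩; omega
        rw [e1, e2]; ring
      · have e1 : Ez t (r:ℤ) a v = 0 := by
          apply if_neg; rintro ⟨h3, -⟩; omega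
        have e2 : Ez t (r:ℤ) a u = 0 := by
          apply if_neg; rintro ⟨h3, -⟩; omega
        rw [e1, e2]; ring

lemma ptB {t r : ℕ} (hr0 : 0 < r) (hrt : r < t) (μ : YoungDiagram) (u b : ℤ) :
    (1 - Fz μ b) * (Ez t (r:ℤ) u b - Ez t (r:ℤ) (u + (t:ℤ)) b)
      = if b = u + (r:ℤ) then 1 - Fz μ b else 0 := by
  set v := u + (t:ℤ) with hvdef
  have ht1 : (1:ℤ) ≤ (t:ℤ) := by exact_mod_cast Nat.one_le_of_lt hrt
  have hr1 : (1:ℤ) ≤ (r:ℤ) := by exact_mod_cast hr0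
  have hrt' : (r:ℤ) < (t:ℤ) := by exact_mod_cast hrt
  by_cases hb : b = u + (r:ℤ)
  · rw [if_pos hb]
    have e1 : Ez t (r:ℤ) u b = 1 := by
      apply if_pos
      refine ⟨by omega, ?_⟩
      rw [show b - u = (r:ℤ) by omega]
      exact Int.emod_eq_of_lt (by omega) (by omega)
    have e2 : Ez t (r:ℤ) v b = 0 := by
      apply if_neg; rintro ⟨h1, -⟩; omega
    rw [e1, e2]; ring
  · rw [if_neg hb]
    rcases lt_trichotomy b v with h1 | h1 | h1
    · by_cases h2 : u < b
      · -- u < b < v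
        have e1 : Ez t (r:ℤ) u b = 0 := by
          apply if_neg
          rintro ⟨-, h3⟩
          rw [Int.emod_eq_of_lt (by omega) (by omega)] at h3
          omega
        have e2 : Ez t (r:ℤ) v b = 0 := by
          apply if_neg; rintro ⟨h3, -⟩; omega
        rw [e1, e2]; ring
      · have e1 : Ez t (r:ℤ) u b = 0 := by
          apply if_neg; rintro ⟨h3, -⟩; omega
        have e2 : Ez t (r:ℤ) v b = 0 := by
          apply if_neg; rintro ⟨h3, -⟩; omega
        rw [e1, e2]; ring
    · rw [h1]
      have e1 : Ez t (r:ℤ) u v = 0 := by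
        apply if_neg
        rintro ⟨-, h3⟩
        rw [show v - u = (t:ℤ) by omega, Int.emod_self] at h3
        omega
      have e2 : Ez t (r:ℤ) v v = 0 := by
        apply if_neg; rintro ⟨h3, -⟩; omega
      rw [e1, e2]; ring
    · -- b > v : residues agree
      have e : Ez t (r:ℤ) u b = Ez t (r:ℤ) v b := by
        unfold Ez
        rw [show b - u = (b - v) + (t:ℤ) by omega, emod_shift]
        have : (u < b ∧ (b - v) % (t:ℤ) = (r:ℤ)) ↔ (v < b ∧ (b - v) % (t:ℤ) = (r:ℤ)) := by
          constructor <;> rintro ⟨-, h2⟩ <;> exact ⟨by omega, h2⟩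
        rw [if_congr this rfl rfl]
      rw [e]; ring

-- pointwise lemmas, case r = 0
lemma ptA0 {t : ℕ} (ht : 1 ≤ t) {μ : YoungDiagram} {u : ℤ} (hu : ¬ ZOne μ u) (a : ℤ) :
    Fz μ a * (Ez t 0 a (u + (t:ℤ)) - Ez t 0 a u) = 0 := by
  set v := u + (t:ℤ) with hvdef
  have ht1 : (1:ℤ) ≤ (t:ℤ) := by exact_mod_cast ht
  rcases lt_trichotomy a u with h1 | h1 | h1
  · have e : Ez t 0 a v = Ez t 0 a u := by
      unfold Ez
      rw [show v - a = (u - a) + (t:ℤ) by omega, emod_shift]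
      have : (a < v ∧ (u - a) % (t:ℤ) = 0) ↔ (a < u ∧ (u - a) % (t:ℤ) = 0) := by
        constructor <;> rintro ⟨-, h2⟩ <;> exact ⟨by omega, h2⟩
      rw [if_congr this rfl rfl]
    rw [e]; ring
  · rw [h1, fz_zero hu]; ring
  · rcases lt_trichotomy a v with h2 | h2 | h2
    · have e1 : Ez t 0 a v = 0 := by
        apply if_neg
        rintro ⟨-, h3⟩
        rw [Int.emod_eq_of_lt (by omega) (by omega)] at h3
        omega
      have e2 : Ez t 0 a u = 0 := by
        apply if_neg; rintro ⟨h3, -⟩; omega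
      rw [e1, e2]; ring
    · rw [h2]
      have e1 : Ez t 0 v v = 0 := by
        apply if_neg; rintro ⟨h3, -⟩; omega
      have e2 : Ez t 0 v u = 0 := by
        apply if_neg; rintro ⟨h3, -⟩; omega
      rw [e1, e2]; ring
    · have e1 : Ez t 0 a v = 0 := by
        apply if_neg; rintro ⟨h3, -⟩; omega
      have e2 : Ez t 0 a u = 0 := by
        apply if_neg; rintro ⟨h3, -⟩; omega
      rw [e1, e2]; ring

lemma ptB0 {t : ℕ} (ht : 1 ≤ t) {μ : YoungDiagram} {u : ℤ} (hv : ZOne μ (u + (t:ℤ))) (b : ℤ) :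
    (1 - Fz μ b) * (Ez t 0 u b - Ez t 0 (u + (t:ℤ)) b) = 0 := by
  set v := u + (t:ℤ) with hvdef
  have ht1 : (1:ℤ) ≤ (t:ℤ) := by exact_mod_cast ht
  rcases lt_trichotomy b v with h1 | h1 | h1
  · by_cases h2 : u < b
    · have e1 : Ez t 0 u b = 0 := by
        apply if_neg
        rintro ⟨-, h3⟩
        rw [Int.emod_eq_of_lt (by omega) (by omega)] at h3
        omega
      have e2 : Ez t 0 v b = 0 := by
        apply if_neg; rintro ⟨h3, -⟩; omega
      rw [e1, e2]; ring
    · have e1 : Ez t 0 u b = 0 := by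
        apply if_neg; rintro ⟨h3, -⟩; omega
      have e2 : Ez t 0 v b = 0 := by
        apply if_neg; rintro ⟨h3, -⟩; omega
      rw [e1, e2]; ring
  · rw [h1, fz_one hv]; ring
  · have e : Ez t 0 u b = Ez t 0 v b := by
      unfold Ez
      rw [show b - u = (b - v) + (t:ℤ) by omega, emod_shift]
      have : (u < b ∧ (b - v) % (t:ℤ) = 0) ↔ (v < b ∧ (b - v) % (t:ℤ) = 0) := by
        constructor <;> rintro ⟨-, h2⟩ <;> exact ⟨by omega, h2⟩
      rw [if_congr this rfl rfl]
    rw [e]; ring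

lemma cnt_step {t r : ℕ} (ht : 1 ≤ t) (hr : r < t) {μ ν : YoungDiagram} {u : ℤ}
    (hu : ¬ ZOne μ u) (hv : ZOne μ (u + (t:ℤ)))
    (hiff : ∀ j : ℤ, ZOne ν j ↔ (j = u ∨ (j ≠ u + (t : ℤ) ∧ ZOne μ j)))
    {lo hi : ℤ} (hlou : lo ≤ u) (hhiv : u + (t:ℤ) ≤ hi) :
    Cnt t (r:ℤ) ν lo hi - Cnt t (r:ℤ) μ lo hi
      = if 0 < r then Fz μ (u + (t:ℤ) - (r:ℤ)) + 1 - Fz μ (u + (r:ℤ)) else 1 := by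
  set v := u + (t:ℤ) with hvdef
  set W := Finset.Icc lo hi with hW
  have ht1 : (1:ℤ) ≤ (t:ℤ) := by exact_mod_cast ht
  have hmu : u ∈ W := by rw [hW, Finset.mem_Icc]; omega
  have hmv : v ∈ W := by rw [hW, Finset.mem_Icc]; omega
  set D : ℤ → ℤ := fun a => (if a = u then (1:ℤ) else 0) - (if a = v then 1 else 0) with hD
  set E : ℤ → ℤ → ℤ := fun a b => Ez t (r:ℤ) a b with hE
  have step1 : Cnt t (r:ℤ) ν lo hi - Cnt t (r:ℤ) μ lo hi
      = ∑ a ∈ W, ∑ b ∈ W,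
          (D a * ((1 - Fz μ b) * E a b) - D b * (Fz μ a * E a b) - D a * (D b * E a b)) := by
    unfold Cnt
    rw [← Finset.sum_sub_distrib]
    apply Finset.sum_congr rfl
    intro a _
    rw [← Finset.sum_sub_distrib]
    apply Finset.sum_congr rfl
    intro b _
    rw [fz_step ht hu hv hiff a, fz_step ht hu hv hiff b]
    simp only [hD, hE, hvdef]
    ring
  rw [step1]
  have step2 : ∀ a ∈ W, ∑ b ∈ W,
      (D a * ((1 - Fz μ b) * E a b) - D b * (Fz μ a * E a b) - D a * (D b * E a b))
      = D a * (∑ b ∈ W, (1 - Fz μ b) * E a b)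
        - (Fz μ a * E a u - Fz μ a * E a v)
        - D a * (E a u - E a v) := by
    intro a _
    rw [Finset.sum_sub_distrib, Finset.sum_sub_distrib, ← Finset.mul_sum, ← Finset.mul_sum,
      sum_delta_mul hmu hmv, sum_delta_mul hmu hmv]
  rw [Finset.sum_congr rfl step2]
  simp only [Finset.sum_sub_distrib]
  rw [sum_delta_mul hmu hmv (g := fun a => ∑ b ∈ W, (1 - Fz μ b) * E a b),
    sum_delta_mul hmu hmv (g := fun a => E a u - E a v)]
  have euu : E u u = 0 := by apply if_neg; rintro ⟨h3, -⟩; omega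
  have evv : E v v = 0 := by apply if_neg; rintro ⟨h3, -⟩; omega
  have evu : E v u = 0 := by apply if_neg; rintro ⟨h3, -⟩; omega
  by_cases h0 : 0 < r
  · rw [if_pos h0]
    have euv : E u v = 0 := by
      simp only [hE]
      unfold Ez
      rw [show v - u = (t:ℤ) by omega, Int.emod_self]
      apply if_neg
      rintro ⟨-, h3⟩
      have : (r:ℤ) = 0 := h3.symm
      omega
    have hYuv : ∑ b ∈ W, (1 - Fz μ b) * E u b - ∑ b ∈ W, (1 - Fz μ b) * E v b
        = 1 - Fz μ (u + (r:ℤ)) := by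
      rw [← Finset.sum_sub_distrib]
      have hpw : ∀ b ∈ W, (1 - Fz μ b) * E u b - (1 - Fz μ b) * E v b
          = if b = u + (r:ℤ) then 1 - Fz μ b else 0 := by
        intro b _
        rw [← mul_sub]
        exact ptB h0 hr μ u b
      rw [Finset.sum_congr rfl hpw, Finset.sum_ite_eq', if_pos]
      rw [hW, Finset.mem_Icc]
      have h4 : (r:ℤ) < (t:ℤ) := by exact_mod_cast hr
      omega
    have hZuv : ∑ a ∈ W, Fz μ a * E a u - ∑ a ∈ W, Fz μ a * E a v
        = - Fz μ (u + (t:ℤ) - (r:ℤ)) := by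
      rw [← Finset.sum_sub_distrib]
      have hpw : ∀ a ∈ W, Fz μ a * E a u - Fz μ a * E a v
          = - (if a = u + (t:ℤ) - (r:ℤ) then Fz μ a else 0) := by
        intro a _
        rw [← ptA h0 hr μ u a]
        ring
      rw [Finset.sum_congr rfl hpw, Finset.sum_neg_distrib, Finset.sum_ite_eq', if_pos]
      rw [hW, Finset.mem_Icc]
      have h4 : (r:ℤ) < (t:ℤ) := by exact_mod_cast hr
      have h5 : (1:ℤ) ≤ (r:ℤ) := by exact_mod_cast h0
      omega
    linarith [hYuv, hZuv, euu, evv, evu, euv]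
  · rw [if_neg h0]
    have hr0 : r = 0 := by omega
    subst hr0
    have hE0 : ∀ a b : ℤ, E a b = Ez t 0 a b := by
      intro a b; simp [hE]
    have euv : E u v = 1 := by
      simp only [hE]
      unfold Ez
      rw [show v - u = (t:ℤ) by omega, Int.emod_self]
      apply if_pos
      exact ⟨by omega, by norm_num⟩
    have hYuv : ∑ b ∈ W, (1 - Fz μ b) * E u b - ∑ b ∈ W, (1 - Fz μ b) * E v b = 0 := by
      rw [← Finset.sum_sub_distrib]
      have hpw : ∀ b ∈ W, (1 - Fz μ b) * E u b - (1 - Fz μ b) * E v b = 0 := by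
        intro b _
        rw [← mul_sub, hE0, hE0]
        exact ptB0 ht hv b
      rw [Finset.sum_congr rfl hpw, Finset.sum_const, smul_zero]
    have hZuv : ∑ a ∈ W, Fz μ a * E a u - ∑ a ∈ W, Fz μ a * E a v = 0 := by
      rw [← Finset.sum_sub_distrib]
      have hpw : ∀ a ∈ W, Fz μ a * E a u - Fz μ a * E a v = 0 := by
        intro a _
        have h6 := ptA0 ht hu a
        rw [mul_sub] at h6
        rw [hE0, hE0]
        linarith
      rw [Finset.sum_congr rfl hpw, Finset.sum_const, smul_zero]
    linarith [hYuv, hZuv, euu, evv, evu, euv]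

lemma ak_step {t r : ℕ} (ht : 1 ≤ t) (hr : r < t) {μ ν : YoungDiagram} {u : ℤ}
    (hu : ¬ ZOne μ u) (hv : ZOne μ (u + (t:ℤ)))
    (hiff : ∀ j : ℤ, ZOne ν j ↔ (j = u ∨ (j ≠ u + (t : ℤ) ∧ ZOne μ j))) :
    Ak t ν r - Ak t μ r
      = if 0 < r then Fz μ (u + (t:ℤ) - (r:ℤ)) + 1 - Fz μ (u + (r:ℤ)) else 1 := by
  set lo : ℤ := min (min (-(μ.colLen 0 : ℤ)) (-(ν.colLen 0 : ℤ))) u with hlo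
  set hi : ℤ := max (max ((μ.rowLen 0 : ℤ)) ((ν.rowLen 0 : ℤ))) (u + (t:ℤ)) with hhi
  have h1 := cnt_step ht hr hu hv hiff (lo := lo) (hi := hi) (by omega) (by omega)
  rwa [cnt_eq_card r (lo := lo) (hi := hi) (by omega) (by omega),
    cnt_eq_card r (lo := lo) (hi := hi) (by omega) (by omega)] at h1

lemma ak_pair_step {t k : ℕ} (ht : 1 ≤ t) (hk : k < t) {μ ν : YoungDiagram}
    (h : AddHook t μ ν) :
    (Ak t ν k + Ak t ν ((t - k) % t)) - (Ak t μ k + Ak t μ ((t - k) % t)) = 2 := by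
  obtain ⟨u, hu, hv, hiff⟩ := h
  by_cases hk0 : k = 0
  · subst hk0
    have hmod : (t - 0) % t = 0 := by simp [Nat.mod_self]
    rw [hmod]
    have h1 := ak_step ht hk hu hv hiff
    rw [if_neg (by omega)] at h1
    linarith
  · have hk' : (t - k) % t = t - k := Nat.mod_eq_of_lt (by omega)
    rw [hk']
    have h1 := ak_step ht hk hu hv hiff
    have h2 := ak_step ht (r := t - k) (by omega) hu hv hiff
    rw [if_pos (by omega)] at h1
    rw [if_pos (by omega)] at h2
    have hc1 : ((t - k : ℕ) : ℤ) = (t : ℤ) - (k : ℤ) := by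
      push_cast [Nat.cast_sub (le_of_lt hk)]; ring
    rw [hc1] at h2
    rw [show u + (t:ℤ) - ((t:ℤ) - (k:ℤ)) = u + (k:ℤ) by ring] at h2
    rw [show u + ((t:ℤ) - (k:ℤ)) = u + (t:ℤ) - (k:ℤ) by ring] at h2
    linarith

lemma card_eq_sum_ak {t : ℕ} (ht : 1 ≤ t) (μ : YoungDiagram) :
    (μ.card : ℤ) = ∑ r ∈ Finset.range t, Ak t μ r := by
  have h := Finset.card_eq_sum_card_fiberwise
    (f := fun c : ℕ × ℕ => hookLen μ c.1 c.2 % t) (s := μ.cells) (t := Finset.range t)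
    (fun c _ => Finset.mem_range.mpr (Nat.mod_lt _ (by omega)))
  unfold Ak
  rw [show (μ.card : ℤ) = ((μ.cells.card : ℕ) : ℤ) from rfl]
  rw [h]
  push_cast
  rfl

lemma filter_pos_eq : ∀ t : ℕ, (Finset.range t).filter (fun r => 0 < r) = Finset.Ico 1 t := by
  intro t
  ext x
  simp [Finset.mem_Ico]
  omega

lemma addHook_card {t : ℕ} (ht : 1 ≤ t) {μ ν : YoungDiagram} (h : AddHook t μ ν) :
    (ν.card : ℤ) = (μ.card : ℤ) + t := by
  obtain ⟨u, hu, hv, hiff⟩ := h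
  rw [card_eq_sum_ak ht, card_eq_sum_ak ht]
  have hstep : ∀ r ∈ Finset.range t, Ak t ν r - Ak t μ r
      = if 0 < r then Fz μ (u + (t:ℤ) - (r:ℤ)) + 1 - Fz μ (u + (r:ℤ)) else 1 := by
    intro r hrr
    exact ak_step ht (Finset.mem_range.mp hrr) hu hv hiff
  have hsum : ∑ r ∈ Finset.range t, (Ak t ν r - Ak t μ r)
      = ∑ r ∈ Finset.range t,
          (if 0 < r then Fz μ (u + (t:ℤ) - (r:ℤ)) + 1 - Fz μ (u + (r:ℤ)) else 1) :=
    Finset.sum_congr rfl hstep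
  rw [Finset.sum_sub_distrib] at hsum
  have hval : ∑ r ∈ Finset.range t,
      (if 0 < r then Fz μ (u + (t:ℤ) - (r:ℤ)) + 1 - Fz μ (u + (r:ℤ)) else 1) = t := by
    have hsplit : ∀ r ∈ Finset.range t,
        (if 0 < r then Fz μ (u + (t:ℤ) - (r:ℤ)) + 1 - Fz μ (u + (r:ℤ)) else 1)
        = 1 + ((if 0 < r then Fz μ (u + (t:ℤ) - (r:ℤ)) else 0)
            - (if 0 < r then Fz μ (u + (r:ℤ)) else 0)) := by
      intro r _
      split_ifs <;> ring
    rw [Finset.sum_congr rfl hsplit]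
    rw [Finset.sum_add_distrib, Finset.sum_sub_distrib, Finset.sum_const]
    have e1 : ∑ r ∈ Finset.range t, (if 0 < r then Fz μ (u + (t:ℤ) - (r:ℤ)) else 0)
        = ∑ r ∈ Finset.Ico 1 t, Fz μ (u + (t:ℤ) - (r:ℤ)) := by
      rw [← Finset.sum_filter, filter_pos_eq]
    have e2 : ∑ r ∈ Finset.range t, (if 0 < r then Fz μ (u + (r:ℤ)) else 0)
        = ∑ r ∈ Finset.Ico 1 t, Fz μ (u + (r:ℤ)) := by
      rw [← Finset.sum_filter, filter_pos_eq]
    have e3 : ∑ r ∈ Finset.Ico 1 t, Fz μ (u + (t:ℤ) - (r:ℤ))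
        = ∑ r ∈ Finset.Ico 1 t, Fz μ (u + (r:ℤ)) := by
      apply Finset.sum_nbij' (i := fun r => t - r) (j := fun r => t - r)
      · intro a ha
        rw [Finset.mem_Ico] at *
        omega
      · intro a ha
        rw [Finset.mem_Ico] at *
        omega
      · intro a ha
        rw [Finset.mem_Ico] at ha
        omega
      · intro a ha
        rw [Finset.mem_Ico] at ha
        omega
      · intro a ha
        rw [Finset.mem_Ico] at ha
        congr 1
        push_cast [Nat.cast_sub (by omega : a ≤ t)]
        ring
    rw [e1, e2, e3]
    simp
  rw [hval] at hsum
  linarith [hsum]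

lemma chain {t : ℕ} (ht : 1 ≤ t) {k : ℕ} (hk : k < t) {μ lam : YoungDiagram}
    (h : GEt t μ lam) :
    ∃ m : ℕ, (lam.card : ℤ) = (μ.card : ℤ) + m * t ∧
      (Ak t lam k + Ak t lam ((t - k) % t)) - (Ak t μ k + Ak t μ ((t - k) % t)) = 2 * m := by
  induction h with
  | refl => exact ⟨0, by simp⟩
  | tail hab hbc ih =>
    obtain ⟨m, hcard, hak⟩ := ih
    refine ⟨m + 1, ?_, ?_⟩
    · rw [addHook_card ht hbc, hcard]
      push_cast
      ring
    · have h2 := ak_pair_step ht hk hbc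
      push_cast
      linarith


end Stmt15Aux

theorem stmt15 (t : ℕ) (ht : 1 ≤ t) (μ lam : YoungDiagram) (hμ : IsTCore t μ)
    (hcore : GEt t μ lam) (n k : ℕ) (hk : k < t)
    (hsize : lam.card = μ.card + n * t) :
    (((lam.cells.filter (fun c => hookLen lam c.1 c.2 % t = k)).card : ℤ)
      + ((lam.cells.filter (fun c => hookLen lam c.1 c.2 % t = (t - k) % t)).card : ℤ))
    - (((μ.cells.filter (fun c => hookLen μ c.1 c.2 % t = k)).card : ℤ)
      + ((μ.cells.filter (fun c => hookLen μ c.1 c.2 % t = (t - k) % t)).card : ℤ))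
      = 2 * (n : ℤ) := by
  obtain ⟨m, hcard, hak⟩ := Stmt15Aux.chain ht hk hcore
  have h1 : (lam.card : ℤ) = (μ.card : ℤ) + (n : ℤ) * t := by exact_mod_cast hsize
  have ht0 : (t : ℤ) ≠ 0 := by
    have : (1:ℤ) ≤ (t:ℤ) := by exact_mod_cast ht
    omega
  have h2 : (m : ℤ) * t = (n : ℤ) * t := by linarith
  have hmn : (m : ℤ) = (n : ℤ) := mul_right_cancel₀ ht0 h2
  have := hak
  unfold Stmt15Aux.Ak at this
  rw [hmn] at this
  exact this
end
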